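/- arXiv:2012.07607 — 12 statements merged into one kernel-verified Lean document; each statement's English description precedes it below -/
import Mathlib

section
/- Let ρ : ℝ≥0 → ℝ≥0 be continuous, non-decreasing and positive definite (ρ(0)=0 and ρ(s)>0 for s>0), and let f : ℝ≥0 → ℝ≥0 be quasi-uniformly continuous with ∫₀^∞ ρ(f(t)) dt < ∞. Then f(t) → 0 as t → ∞. -/
open MeasureTheory Filter Set

/-- Lemma 3, case: `ρ` continuous, non-decreasing and positive definite, `f` nonnegative and
quasi-uniformly continuous, with `∫₀^∞ ρ(f t) dt < ∞`.  Then `f(t) → 0` as `t → ∞`. -/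
theorem stmt3 (ρ f : ℝ → ℝ)
    (hρc : ContinuousOn ρ (Ici 0)) (hρmono : MonotoneOn ρ (Ici 0))
    (hρ0 : ρ 0 = 0) (hρpos : ∀ s > (0:ℝ), 0 < ρ s)
    (hρnn : ∀ s ≥ (0:ℝ), 0 ≤ ρ s)
    (hfnn : ∀ t ≥ (0:ℝ), 0 ≤ f t)
    (hquc : ∀ ε > (0:ℝ), ∃ δ > (0:ℝ), ∀ t₀ t : ℝ, 0 ≤ t₀ → t₀ ≤ t → t ≤ t₀ + δ →
      f t - f t₀ < ε)
    (hint : IntegrableOn (fun t => ρ (f t)) (Ici 0)) :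
    Tendsto f atTop (nhds 0) := by
  have hint' : IntegrableOn (fun t => ρ (f t)) (Ioi 0) :=
    hint.mono_set Ioi_subset_Ici_self
  rw [Metric.tendsto_atTop]
  intro ε hε
  by_contra hcon
  push_neg at hcon
  obtain ⟨δ, hδ, hq⟩ := hquc (ε/2) (half_pos hε)
  have hcpos : 0 < ρ (ε/2) := hρpos _ (half_pos hε)
  set F : ℝ → ℝ := fun b => ∫ s in (0:ℝ)..b, ρ (f s) with hF
  have hFt : Tendsto F atTop (nhds (∫ s in Ioi (0:ℝ), ρ (f s))) :=
    intervalIntegral_tendsto_integral_Ioi 0 hint' tendsto_id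
  have hFt' : Tendsto (fun t => F (t - δ)) atTop (nhds (∫ s in Ioi (0:ℝ), ρ (f s))) :=
    hFt.comp (tendsto_atTop_add_const_right _ (-δ) tendsto_id)
  have hdiff : Tendsto (fun t => F t - F (t - δ)) atTop (nhds 0) := by
    simpa using hFt.sub hFt'
  have hev : ∀ᶠ t in atTop, |F t - F (t - δ)| < δ * ρ (ε/2) := by
    have := Metric.tendsto_nhds.mp hdiff (δ * ρ (ε/2)) (by positivity)
    simpa [Real.dist_eq] using this
  obtain ⟨N, hN⟩ := eventually_atTop.mp hev
  obtain ⟨t, ht, hft⟩ := hcon (max N δ)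
  have htδ : δ ≤ t := le_trans (le_max_right N δ) ht
  have ht0 : 0 ≤ t := le_trans hδ.le htδ
  have hftε : ε ≤ f t := by
    have : dist (f t) 0 = f t := by
      rw [Real.dist_eq, sub_zero, abs_of_nonneg (hfnn t ht0)]
    linarith [hft, this.symm ▸ hft]
  have key : ∀ s ∈ Icc (t - δ) t, ρ (ε/2) ≤ ρ (f s) := by
    intro s hs
    have hs0 : 0 ≤ s := by linarith [hs.1]
    have h1 : f t - f s < ε/2 := hq s t hs0 hs.2 (by linarith [hs.1])
    have hfs : ε/2 ≤ f s := by linarith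
    exact hρmono (mem_Ici.2 (half_pos hε).le) (mem_Ici.2 (hfnn s hs0)) hfs
  have hIcc : IntervalIntegrable (fun s => ρ (f s)) volume (t - δ) t := by
    apply (hint.mono_set ?_).intervalIntegrable
    rw [uIcc_of_le (by linarith)]
    intro x hx
    exact le_trans (by linarith) hx.1
  have hIcc0 : IntervalIntegrable (fun s => ρ (f s)) volume 0 (t - δ) := by
    apply (hint.mono_set ?_).intervalIntegrable
    rw [uIcc_of_le (by linarith)]
    intro x hx
    exact hx.1
  have hlow : δ * ρ (ε/2) ≤ ∫ s in (t - δ)..t, ρ (f s) := by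
    have hmono := intervalIntegral.integral_mono_on (by linarith : t - δ ≤ t)
      (intervalIntegrable_const) hIcc key
    rw [intervalIntegral.integral_const] at hmono
    have : (t - (t - δ)) • ρ (ε/2) = δ * ρ (ε/2) := by
      rw [smul_eq_mul]; ring
    linarith [this ▸ hmono]
  have hsplit : F t - F (t - δ) = ∫ s in (t - δ)..t, ρ (f s) := by
    have := intervalIntegral.integral_add_adjacent_intervals hIcc0 hIcc
    simp only [hF]
    linarith [this]
  have hbound := hN t (le_trans (le_max_left N δ) ht)
  rw [hsplit] at hbound
  have : ∫ s in (t - δ)..t, ρ (f s) ≤ |∫ s in (t - δ)..t, ρ (f s)| := le_abs_self _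
  linarith
end

section
/- Let ρ : ℝ≥0 → ℝ≥0 be continuous and positive definite, and let f : ℝ≥0 → ℝ≥0 be bounded and quasi-uniformly continuous with ∫₀^∞ ρ(f(t)) dt < ∞. Then f(t) → 0 as t → ∞. -/
open MeasureTheory Filter Set

/-- Lemma 3, case: `ρ` continuous and positive definite, `f` nonnegative, bounded and
quasi-uniformly continuous, with `∫₀^∞ ρ(f t) dt < ∞`.  Then `f(t) → 0` as `t → ∞`. -/
theorem stmt4 (ρ f : ℝ → ℝ)
    (hρc : ContinuousOn ρ (Ici 0))
    (hρ0 : ρ 0 = 0) (hρpos : ∀ s > (0:ℝ), 0 < ρ s)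
    (hρnn : ∀ s ≥ (0:ℝ), 0 ≤ ρ s)
    (hfnn : ∀ t ≥ (0:ℝ), 0 ≤ f t)
    (hfbdd : ∃ C : ℝ, ∀ t ≥ (0:ℝ), f t ≤ C)
    (hquc : ∀ ε > (0:ℝ), ∃ δ > (0:ℝ), ∀ t₀ t : ℝ, 0 ≤ t₀ → t₀ ≤ t → t ≤ t₀ + δ →
      f t - f t₀ < ε)
    (hint : IntegrableOn (fun t => ρ (f t)) (Ici 0)) :
    Tendsto f atTop (nhds 0) := by
  classical
  obtain ⟨C, hC⟩ := hfbdd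
  by_contra hcon
  rw [Metric.tendsto_atTop] at hcon
  push_neg at hcon
  obtain ⟨ε, hε, hfreq⟩ := hcon
  have hfε : ∀ N : ℝ, ∃ t, max N 0 ≤ t ∧ ε ≤ f t := by
    intro N
    obtain ⟨t, ht, hd⟩ := hfreq (max N 0)
    have ht0 : (0:ℝ) ≤ t := le_trans (le_max_right _ _) ht
    refine ⟨t, ht, ?_⟩
    rwa [Real.dist_eq, sub_zero, abs_of_nonneg (hfnn t ht0)] at hd
  obtain ⟨t₁, ht₁, hft₁⟩ := hfε 0
  have hεC : ε ≤ C := le_trans hft₁ (hC t₁ (le_trans (le_max_right _ _) ht₁))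
  obtain ⟨δ, hδ, hδq⟩ := hquc (ε/2) (by linarith)
  have hne : (Icc (ε/2) C).Nonempty := ⟨C, by constructor <;> linarith⟩
  have hsub : Icc (ε/2) C ⊆ Ici (0:ℝ) := fun x hx => le_trans (by linarith) hx.1
  obtain ⟨s₀, hs₀, hmin⟩ := isCompact_Icc.exists_isMinOn hne (hρc.mono hsub)
  set c := ρ s₀ with hc
  have hcpos : 0 < c := hρpos s₀ (lt_of_lt_of_le (by linarith) hs₀.1)
  set g := fun t => ρ (f t) with hgdef
  have hgint : IntegrableOn g (Ioi 0) := hint.mono_set Ioi_subset_Ici_self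
  have hgnn : ∀ u, (0:ℝ) ≤ u → 0 ≤ g u := fun u hu => hρnn _ (hfnn u hu)
  set L := ∫ x in Ioi (0:ℝ), g x with hL
  have htend : Tendsto (fun b => ∫ x in (0:ℝ)..b, g x) atTop (nhds L) :=
    MeasureTheory.intervalIntegral_tendsto_integral_Ioi 0 hgint tendsto_id
  have hev : ∀ᶠ b in atTop, L - c*δ < ∫ x in (0:ℝ)..b, g x :=
    htend.eventually (eventually_gt_nhds (by nlinarith))
  obtain ⟨B, hB⟩ := eventually_atTop.mp hev
  obtain ⟨t, ht, hft⟩ := hfε (max B 0 + δ)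
  have ht0 : (0:ℝ) ≤ t := le_trans (le_max_right _ _) ht
  have htB : max B 0 + δ ≤ t := le_trans (le_max_left _ _) ht
  have htδ0 : (0:ℝ) ≤ t - δ := by
    have := le_max_right B 0; linarith
  have htδB : B ≤ t - δ := by
    have := le_max_left B 0; linarith
  have hItt : IntervalIntegrable g volume (t-δ) t := by
    rw [intervalIntegrable_iff]
    apply hint.mono_set
    rw [Set.uIoc_of_le (by linarith : t - δ ≤ t)]
    exact fun x hx => le_trans htδ0 hx.1.le
  have hI1 : IntervalIntegrable g volume 0 (t-δ) := by
    rw [intervalIntegrable_iff]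
    apply hint.mono_set
    rw [Set.uIoc_of_le htδ0]
    exact fun x hx => hx.1.le
  have hlow : c * δ ≤ ∫ x in (t-δ)..t, g x := by
    have hconst : ∫ x in (t-δ)..t, (c:ℝ) = c * δ := by
      rw [intervalIntegral.integral_const, smul_eq_mul]; ring
    rw [← hconst]
    apply intervalIntegral.integral_mono_on (by linarith) intervalIntegrable_const hItt
    intro u hu
    have hu0 : (0:ℝ) ≤ u := le_trans htδ0 hu.1
    have h1 : f t - f u < ε/2 := hδq u t hu0 hu.2 (by linarith [hu.1])
    have h2 : ε/2 ≤ f u := by linarith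
    exact hmin ⟨h2, hC u hu0⟩
  have hsplit : (∫ x in (0:ℝ)..(t-δ), g x) + ∫ x in (t-δ)..t, g x = ∫ x in (0:ℝ)..t, g x :=
    intervalIntegral.integral_add_adjacent_intervals hI1 hItt
  have hupper : ∫ x in (0:ℝ)..t, g x ≤ L := by
    rw [intervalIntegral.integral_of_le ht0]
    apply setIntegral_mono_set hgint
    · exact (ae_restrict_iff' measurableSet_Ioi).mpr (ae_of_all _ fun u hu => hgnn u hu.le)
    · exact HasSubset.Subset.eventuallyLE Ioc_subset_Ioi_self
  have hfinal := hB (t - δ) htδB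
  linarith
end

section
/- Let ρ : ℝ≥0 → ℝ≥0 be continuous, non-decreasing and positive definite, and let f : ℝ≥0 → ℝ≥0 be such that -f is quasi-uniformly continuous and ∫₀^∞ ρ(f(t)) dt < ∞. Then f(t) → 0 as t → ∞. -/
open MeasureTheory Filter Set

/-- Lemma 3, case: `ρ` continuous, non-decreasing and positive definite, `-f`
quasi-uniformly continuous (`f` nonnegative), with `∫₀^∞ ρ(f t) dt < ∞`.
Then `f(t) → 0` as `t → ∞`. -/
theorem stmt5 (ρ f : ℝ → ℝ)
    (hρc : ContinuousOn ρ (Ici 0)) (hρmono : MonotoneOn ρ (Ici 0))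
    (hρ0 : ρ 0 = 0) (hρpos : ∀ s > (0:ℝ), 0 < ρ s)
    (hρnn : ∀ s ≥ (0:ℝ), 0 ≤ ρ s)
    (hfnn : ∀ t ≥ (0:ℝ), 0 ≤ f t)
    (hquc : ∀ ε > (0:ℝ), ∃ δ > (0:ℝ), ∀ t₀ t : ℝ, 0 ≤ t₀ → t₀ ≤ t → t ≤ t₀ + δ →
      (-f) t - (-f) t₀ < ε)
    (hint : IntegrableOn (fun t => ρ (f t)) (Ici 0)) :
    Tendsto f atTop (nhds 0) := by
  by_contra h
  have key : ∃ ε > (0:ℝ), ∃ᶠ t in atTop, ε ≤ f t := by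
    by_contra hk
    push_neg at hk
    apply h
    refine tendsto_order.2 ⟨?_, ?_⟩
    · intro a ha
      filter_upwards [eventually_ge_atTop (0:ℝ)] with t ht
      exact lt_of_lt_of_le ha (hfnn t ht)
    · intro a ha
      have h2 := hk a ha
      have h2 : ∀ᶠ t in atTop, ¬ (a ≤ f t) := h2.mono fun t ht => not_le.2 ht
      filter_upwards [h2] with t ht
      exact lt_of_not_ge ht
  obtain ⟨ε, hε, hfreq⟩ := key
  obtain ⟨δ, hδ, hδ'⟩ := hquc (ε/2) (by positivity)
  have hex : ∀ A : ℝ, ∃ t, A ≤ t ∧ ε ≤ f t := by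
    intro A
    obtain ⟨t, ht1, ht2⟩ := (frequently_atTop.mp hfreq) A
    exact ⟨t, ht1, ht2⟩
  choose T hT1 hT2 using hex
  set u : ℕ → ℝ := fun n => Nat.rec (T 0) (fun _ prev => T (prev + δ)) n with hu
  have hu0 : (0:ℝ) ≤ u 0 := hT1 0
  have hstep : ∀ n, u n + δ ≤ u (n+1) := fun n => hT1 (u n + δ)
  have hfu : ∀ n, ε ≤ f (u n) := by
    intro n; cases n with
    | zero => exact hT2 0
    | succ m => exact hT2 (u m + δ)
  have hmono : Monotone u := monotone_nat_of_le_succ fun n =>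
    le_trans (by linarith) (hstep n)
  have hunn : ∀ n, 0 ≤ u n := fun n => hu0.trans (hmono (Nat.zero_le n))
  set c : ℝ := ρ (ε/2) * δ with hc
  have hcpos : 0 < c := mul_pos (hρpos _ (by positivity)) hδ
  set I : ℕ → Set ℝ := fun n => Ico (u n) (u n + δ) with hI
  have hIsub : ∀ n, I n ⊆ Ici (0:ℝ) := fun n t ht => le_trans (hunn n) ht.1
  have hlow : ∀ n, ∀ t ∈ I n, ε/2 ≤ f t := by
    intro n t ht
    have h3 := hδ' (u n) t (hunn n) ht.1 (le_of_lt ht.2)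
    simp only [Pi.neg_apply] at h3
    linarith [hfu n]
  have hflow : ∀ n, ∀ t ∈ I n, ρ (ε/2) ≤ ρ (f t) := by
    intro n t ht
    exact hρmono (mem_Ici.2 (by positivity)) (mem_Ici.2 (hfnn t (hIsub n ht)))
      (hlow n t ht)
  have hintI : ∀ n, IntegrableOn (fun t => ρ (f t)) (I n) := fun n =>
    hint.mono_set (hIsub n)
  have hIineq : ∀ n, c ≤ ∫ t in I n, ρ (f t) := by
    intro n
    have hmeas : volume (I n) = ENNReal.ofReal δ := by
      rw [hI]; simp [Real.volume_Ico]
    have h4 := setIntegral_ge_of_const_le_real measurableSet_Ico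
      (by rw [hmeas]; exact ENNReal.ofReal_ne_top) (hflow n) (hintI n)
    rw [measureReal_def, show Ico (u n) (u n + δ) = I n from rfl, hmeas, ENNReal.toReal_ofReal hδ.le] at h4
    exact h4
  have hgap : ∀ m n, m < n → u m + δ ≤ u n := fun m n hmn =>
    (hstep m).trans (hmono hmn)
  have hdisj : ∀ m n : ℕ, m ≠ n → Disjoint (I m) (I n) := by
    intro m n hmn
    rcases hmn.lt_or_gt with hlt | hlt
    · refine Set.Ico_disjoint_Ico.2 ?_
      calc min (u m + δ) (u n + δ) ≤ u m + δ := min_le_left _ _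
        _ ≤ u n := hgap m n hlt
        _ ≤ max (u m) (u n) := le_max_right _ _
    · refine Set.Ico_disjoint_Ico.2 ?_
      calc min (u m + δ) (u n + δ) ≤ u n + δ := min_le_right _ _
        _ ≤ u m := hgap n m hlt
        _ ≤ max (u m) (u n) := le_max_left _ _
  set J : ℝ := ∫ t in Ici (0:ℝ), ρ (f t) with hJ
  have hbound : ∀ N : ℕ, (N : ℝ) * c ≤ J := by
    intro N
    have hunion : ∫ t in (⋃ k ∈ Finset.range N, I k), ρ (f t)
        = ∑ k ∈ Finset.range N, ∫ t in I k, ρ (f t) := by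
      refine integral_biUnion_finset _ (fun k _ => measurableSet_Ico)
        ?_ (fun k _ => hintI k)
      intro k _ l _ hkl
      exact hdisj k l hkl
    have hsum : (N : ℝ) * c ≤ ∑ k ∈ Finset.range N, ∫ t in I k, ρ (f t) := by
      calc (N : ℝ) * c = ∑ _k ∈ Finset.range N, c := by
            rw [Finset.sum_const, Finset.card_range, nsmul_eq_mul]
        _ ≤ _ := Finset.sum_le_sum fun k _ => hIineq k
    have hle : ∫ t in (⋃ k ∈ Finset.range N, I k), ρ (f t) ≤ J := by
      refine setIntegral_mono_set hint ?_ ?_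
      · rw [EventuallyLE, ae_restrict_iff' measurableSet_Ici]
        exact ae_of_all _ fun t ht => hρnn _ (hfnn t ht)
      · exact HasSubset.Subset.eventuallyLE (Set.iUnion₂_subset fun k _ => hIsub k)
    linarith [hunion ▸ hle, hsum]
  obtain ⟨N, hN⟩ := exists_nat_gt (J / c)
  have : J < N * c := by
    rw [div_lt_iff₀ hcpos] at hN; linarith
  linarith [hbound N]
end

section
/- Let ρ : ℝ≥0 → ℝ≥0 be continuous and positive definite, and let f : ℝ≥0 → ℝ≥0 be bounded with -f quasi-uniformly continuous and ∫₀^∞ ρ(f(t)) dt < ∞. Then f(t) → 0 as t → ∞. -/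
open MeasureTheory Filter Set

/-- Lemma 3, case: `ρ` continuous and positive definite, `f` nonnegative and bounded with
`-f` quasi-uniformly continuous, with `∫₀^∞ ρ(f t) dt < ∞`.  Then `f(t) → 0`. -/
theorem stmt6 (ρ f : ℝ → ℝ)
    (hρc : ContinuousOn ρ (Ici 0))
    (hρ0 : ρ 0 = 0) (hρpos : ∀ s > (0:ℝ), 0 < ρ s)
    (hρnn : ∀ s ≥ (0:ℝ), 0 ≤ ρ s)
    (hfnn : ∀ t ≥ (0:ℝ), 0 ≤ f t)
    (hfbdd : ∃ C : ℝ, ∀ t ≥ (0:ℝ), f t ≤ C)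
    (hquc : ∀ ε > (0:ℝ), ∃ δ > (0:ℝ), ∀ t₀ t : ℝ, 0 ≤ t₀ → t₀ ≤ t → t ≤ t₀ + δ →
      (-f) t - (-f) t₀ < ε)
    (hint : IntegrableOn (fun t => ρ (f t)) (Ici 0)) :
    Tendsto f atTop (nhds 0) := by
  by_contra hc
  rw [Metric.tendsto_atTop] at hc
  push_neg at hc
  obtain ⟨ε, hε, hfreq⟩ := hc
  -- arbitrarily large times with f ≥ ε
  have key : ∀ b : ℝ, ∃ t, max b 0 ≤ t ∧ ε ≤ f t := by
    intro b
    obtain ⟨t, ht, hd⟩ := hfreq (max b 0)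
    refine ⟨t, ht, ?_⟩
    have ht0 : (0:ℝ) ≤ t := le_trans (le_max_right _ _) ht
    have : dist (f t) 0 = f t := by
      rw [Real.dist_eq, sub_zero, abs_of_nonneg (hfnn t ht0)]
    linarith [hd]
  choose g hg1 hg2 using key
  obtain ⟨C, hC⟩ := hfbdd
  obtain ⟨δ, hδ, hδprop⟩ := hquc (ε/2) (by linarith)
  -- bound on ρ on the compact set Icc (ε/2) C
  have hεC : ε ≤ C := by
    have h0 : (0:ℝ) ≤ g 0 := le_trans (le_max_right _ _) (hg1 0)
    exact le_trans (hg2 0) (hC _ h0)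
  have hKne : ((Icc (ε/2) C) : Set ℝ).Nonempty := ⟨ε/2, le_refl _, by linarith⟩
  have hKsub : Icc (ε/2) C ⊆ Ici 0 := fun x hx => le_trans (by linarith) hx.1
  obtain ⟨x₀, hx₀K, hx₀min⟩ :=
    (isCompact_Icc).exists_isMinOn hKne (hρc.mono hKsub)
  set m := ρ x₀ with hm
  have hmpos : 0 < m := hρpos x₀ (lt_of_lt_of_le (by linarith) hx₀K.1)
  -- the recursive sequence of times
  let u : ℕ → ℝ := fun n => Nat.rec (g 0) (fun _ prev => g (prev + δ)) n
  have hu0 : (0:ℝ) ≤ u 0 := le_trans (le_max_right _ _) (hg1 0)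
  have husucc : ∀ n, u n + δ ≤ u (n + 1) := fun n =>
    le_trans (le_max_left _ _) (hg1 (u n + δ))
  have hunn : ∀ n, (0:ℝ) ≤ u n := by
    intro n
    induction n with
    | zero => exact hu0
    | succ k ih => have := husucc k; linarith
  have hufε : ∀ n, ε ≤ f (u n) := by
    intro n
    cases n with
    | zero => exact hg2 0
    | succ k => exact hg2 (u k + δ)
  -- pointwise lower bound on each interval
  have hpt : ∀ n, ∀ t ∈ Icc (u n) (u n + δ), m ≤ ρ (f t) := by
    intro n t ht
    have ht0 : (0:ℝ) ≤ t := le_trans (hunn n) ht.1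
    have h1 : f (u n) - f t < ε/2 := by
      have h := hδprop (u n) t (hunn n) ht.1 ht.2
      simp only [Pi.neg_apply] at h
      linarith
    have hfl : ε/2 ≤ f t := by
      have := hufε n; linarith
    have hfu : f t ≤ C := hC t ht0
    exact hx₀min (show f t ∈ Icc (ε/2) C from ⟨hfl, hfu⟩)
  -- integral over each interval is at least m*δ
  have hsub : ∀ n, Ioc (u n) (u n + δ) ⊆ Ici (0:ℝ) := by
    intro n t ht
    exact le_trans (hunn n) (le_of_lt ht.1)
  have hIn : ∀ n, m * δ ≤ ∫ t in Ioc (u n) (u n + δ), ρ (f t) := by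
    intro n
    have hInt : IntegrableOn (fun t => ρ (f t)) (Ioc (u n) (u n + δ)) :=
      hint.mono_set (hsub n)
    have hmono : ∫ t in Ioc (u n) (u n + δ), (m : ℝ) ≤
        ∫ t in Ioc (u n) (u n + δ), ρ (f t) := by
      apply setIntegral_mono_on (integrableOn_const (by simp) (by simp))
        hInt measurableSet_Ioc
      intro t ht
      exact hpt n t ⟨le_of_lt ht.1, ht.2⟩
    have hvol : ∫ t in Ioc (u n) (u n + δ), (m : ℝ) = m * δ := by
      simp [Real.volume_Ioc, ENNReal.toReal_ofReal (le_of_lt hδ), max_eq_left (le_of_lt hδ), mul_comm]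
    linarith [hmono, hvol ▸ hmono]
  -- nonnegativity a.e.
  have hnnae : ∀ (s : Set ℝ), MeasurableSet s → s ⊆ Ici (0:ℝ) →
      0 ≤ᵐ[volume.restrict s] fun t => ρ (f t) := by
    intro s hms hs
    filter_upwards [ae_restrict_mem hms] with t ht
    exact hρnn _ (hfnn _ (hs ht))
  -- inductive lower bound
  set I := ∫ t in Ici (0:ℝ), ρ (f t) with hI
  have hstep : ∀ N : ℕ, ((N:ℝ) + 1) * (m * δ) ≤ ∫ t in Icc 0 (u N + δ), ρ (f t) := by
    intro N
    induction N with
    | zero =>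
      have hsub0 : Ioc (u 0) (u 0 + δ) ⊆ Icc 0 (u 0 + δ) := fun t ht =>
        ⟨le_trans hu0 (le_of_lt ht.1), ht.2⟩
      have hInt : IntegrableOn (fun t => ρ (f t)) (Icc 0 (u 0 + δ)) :=
        hint.mono_set (fun t ht => ht.1)
      have := setIntegral_mono_set hInt
        (hnnae _ measurableSet_Icc (fun t ht => ht.1))
        (HasSubset.Subset.eventuallyLE hsub0)
      simpa using le_trans (hIn 0) this
    | succ k ih =>
      have hk1 : u k + δ ≤ u (k+1) + δ := by linarith [husucc k]
      have h0k : (0:ℝ) ≤ u k + δ := by linarith [hunn k]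
      have hsplit : Icc (0:ℝ) (u (k+1) + δ)
          = Icc 0 (u k + δ) ∪ Ioc (u k + δ) (u (k+1) + δ) :=
        (Icc_union_Ioc_eq_Icc h0k hk1).symm
      have hdisj : Disjoint (Icc (0:ℝ) (u k + δ)) (Ioc (u k + δ) (u (k+1) + δ)) := by
        apply Set.disjoint_left.2
        intro t ht1 ht2
        exact absurd ht1.2 (not_le.2 ht2.1)
      have hIccsub : Icc (0:ℝ) (u (k+1) + δ) ⊆ Ici 0 := fun t ht => ht.1
      have hI1 : IntegrableOn (fun t => ρ (f t)) (Icc 0 (u k + δ)) :=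
        hint.mono_set (fun t ht => ht.1)
      have hI2 : IntegrableOn (fun t => ρ (f t)) (Ioc (u k + δ) (u (k+1) + δ)) :=
        hint.mono_set (fun t ht => le_trans h0k (le_of_lt ht.1))
      have hun : ∫ t in Icc 0 (u (k+1) + δ), ρ (f t)
          = (∫ t in Icc 0 (u k + δ), ρ (f t))
            + ∫ t in Ioc (u k + δ) (u (k+1) + δ), ρ (f t) := by
        rw [hsplit]
        exact setIntegral_union hdisj measurableSet_Ioc hI1 hI2
      have hsub2 : Ioc (u (k+1)) (u (k+1) + δ) ⊆ Ioc (u k + δ) (u (k+1) + δ) :=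
        fun t ht => ⟨lt_of_le_of_lt (husucc k) ht.1, ht.2⟩
      have hmono2 := setIntegral_mono_set hI2
        (hnnae _ measurableSet_Ioc (fun t ht => le_trans h0k (le_of_lt ht.1)))
        (HasSubset.Subset.eventuallyLE hsub2)
      have h2 : m * δ ≤ ∫ t in Ioc (u k + δ) (u (k+1) + δ), ρ (f t) :=
        le_trans (hIn (k+1)) hmono2
      rw [hun]
      push_cast
      nlinarith [ih, h2]
  -- conclude
  have hfin : ∀ N : ℕ, ((N:ℝ) + 1) * (m * δ) ≤ I := by
    intro N
    refine le_trans (hstep N) ?_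
    exact setIntegral_mono_set hint (hnnae _ measurableSet_Ici (fun t ht => ht))
      (HasSubset.Subset.eventuallyLE (fun t ht => ht.1))
  obtain ⟨N, hN⟩ := exists_nat_gt (I / (m * δ))
  have hmd : 0 < m * δ := mul_pos hmpos hδ
  have : I < ((N:ℝ) + 1) * (m * δ) := by
    have := (div_lt_iff₀ hmd).1 hN
    nlinarith
  linarith [hfin N]
end

section
/- Every quasi-uniformly continuous function f : ℝ≥0 → ℝ is Lebesgue measurable. -/
open Set

/-- A `δ`-separated set of reals is countable. -/
lemma countable_of_separated {A : Set ℝ} {δ : ℝ} (hδ : 0 < δ)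
    (h : ∀ x ∈ A, ∀ y ∈ A, x < y → x + δ ≤ y) : A.Countable := by
  have key : ∀ x ∈ A, ∀ y ∈ A, x < y → ⌊x/δ⌋ < ⌊y/δ⌋ := by
    intro x hx y hy hxy
    have hsep := h x hx y hy hxy
    have h1 : x/δ + 1 ≤ y/δ := by
      have : (x + δ)/δ ≤ y/δ := by gcongr
      rwa [add_div, div_self hδ.ne'] at this
    have := Int.floor_le_floor h1
    rw [Int.floor_add_one] at this
    omega
  have hinj : Function.Injective (fun x : A => (⌊(x : ℝ)/δ⌋ : ℤ)) := by
    intro x y hxy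
    simp only at hxy
    by_contra hne
    have hne' : (x : ℝ) ≠ y := fun e => hne (Subtype.ext e)
    rcases hne'.lt_or_gt with hlt | hlt
    · exact absurd hxy (key x x.2 y y.2 hlt).ne
    · exact absurd hxy.symm (key y y.2 x x.2 hlt).ne
  have : Countable A := Function.Injective.countable hinj
  exact A.to_countable

/-- A union of closed intervals of a fixed positive length is a measurable set. -/
lemma measurableSet_biUnion_Icc (E : Set ℝ) {δ : ℝ} (hδ : 0 < δ) :
    MeasurableSet (⋃ t ∈ E, Icc t (t + δ)) := by
  set S := ⋃ t ∈ E, Icc t (t + δ) with hS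
  set T := ⋃ t ∈ E, Ioo t (t + δ) with hT
  have hTopen : IsOpen T := isOpen_biUnion fun t _ => isOpen_Ioo
  have hTS : T ⊆ S := Set.iUnion₂_mono fun t _ => Ioo_subset_Icc_self
  -- points of `S \ T` have no point of `E` strictly between `x - δ` and `x`
  set A := {x : ℝ | x ∈ E ∧ ∀ s ∈ E, s ∉ Ioo (x - δ) x} with hA
  set B := {x : ℝ | x - δ ∈ E ∧ ∀ s ∈ E, s ∉ Ioo (x - δ) x} with hB
  have hsub : S \ T ⊆ A ∪ B := by
    rintro x ⟨hxS, hxT⟩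
    simp only [hS, mem_iUnion, mem_Icc] at hxS
    obtain ⟨t₀, ht₀E, ht₀x, hxt₀⟩ := hxS
    have hemp : ∀ s ∈ E, s ∉ Ioo (x - δ) x := by
      intro s hs hmem
      exact hxT (by
        simp only [hT, mem_iUnion, mem_Ioo]
        exact ⟨s, hs, hmem.2, by linarith [hmem.1]⟩)
    have := hemp t₀ ht₀E
    simp only [mem_Ioo, not_and_or, not_lt] at this
    rcases this with h1 | h2
    · right
      have : t₀ = x - δ := le_antisymm h1 (by linarith)
      exact ⟨this ▸ ht₀E, hemp⟩
    · left
      have : t₀ = x := le_antisymm ht₀x h2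
      exact ⟨this ▸ ht₀E, hemp⟩
  have hAc : A.Countable := by
    apply countable_of_separated hδ
    intro x hx y hy hxy
    by_contra hc
    push_neg at hc
    exact hy.2 x hx.1 ⟨by linarith, hxy⟩
  have hBc : B.Countable := by
    apply countable_of_separated hδ
    intro x hx y hy hxy
    by_contra hc
    push_neg at hc
    exact hx.2 (y - δ) hy.1 ⟨by linarith, by linarith⟩
  have hSTc : (S \ T).Countable := (hAc.union hBc).mono hsub
  have : S = T ∪ (S \ T) := by
    rw [union_diff_cancel' (fun x h => h) hTS] -- maybe wrong lemma
  rw [this]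
  exact hTopen.measurableSet.union hSTc.measurableSet

/-- Every quasi-uniformly continuous function `f : [0,∞) → ℝ` is Lebesgue measurable. -/
theorem stmt7 (f : ℝ → ℝ)
    (hquc : ∀ ε > (0:ℝ), ∃ δ > (0:ℝ), ∀ t₀ t : ℝ, 0 ≤ t₀ → t₀ ≤ t → t ≤ t₀ + δ →
      f t - f t₀ < ε) :
    Measurable ((Set.Ici (0:ℝ)).restrict f) := by
  apply measurable_of_Iio
  intro a
  -- the key set in ℝ
  have h : ∀ n : ℕ, ∃ δ > (0:ℝ), ∀ t₀ t : ℝ, 0 ≤ t₀ → t₀ ≤ t → t ≤ t₀ + δ →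
      f t - f t₀ < 1/(n+1) := fun n => hquc _ (by positivity)
  choose δ hδpos hδ using h
  set S : Set ℝ := ⋃ n : ℕ, ⋃ t₀ ∈ {t₀ : ℝ | 0 ≤ t₀ ∧ f t₀ < a - 1/(n+1)}, Icc t₀ (t₀ + δ n)
    with hSdef
  have hSm : MeasurableSet S :=
    MeasurableSet.iUnion fun n => measurableSet_biUnion_Icc _ (hδpos n)
  have hpre : (Set.Ici (0:ℝ)).restrict f ⁻¹' Iio a = Subtype.val ⁻¹' S := by
    ext ⟨t, ht⟩
    simp only [mem_preimage, Set.restrict_apply, mem_Iio, hSdef, mem_iUnion, mem_Icc, mem_setOf_eq]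
    change f t < a ↔ _
    constructor
    · intro hfa
      obtain ⟨n, hn⟩ := exists_nat_one_div_lt (show (0:ℝ) < a - f t by linarith)
      exact ⟨n, t, ⟨ht, by linarith⟩, le_refl t, by linarith [hδpos n]⟩
    · rintro ⟨n, t₀, ⟨ht₀0, ht₀a⟩, ht₀t, htδ⟩
      have := hδ n t₀ t ht₀0 ht₀t htδ
      linarith
  rw [hpre]
  exact hSm.preimage measurable_subtype_coe
end

section
/- Let φ : ℝ≥0 × Ω → Ω be a semiflow on a set Ω contained in ℝⁿ with 0 ∈ Ω, with continuous output map h : Ω → ℝᵏ, h(0) = 0. Suppose there exist a ∈ K∞, V, W : Ω → ℝ≥0 with sup{V(x)+W(x) : x ∈ Ω, |x| ≤ s} < ∞ for all s ≥ 0, and a continuous positive definite ρ : ℝ≥0 → ℝ≥0 such that: a(|h(x)|) ≤ W(x) for all x ∈ Ω; V(φ(t,x)) ≤ V(x) - ∫₀ᵗ ρ(W(φ(s,x))) ds for all x ∈ Ω, t ≥ 0; and t ↦ W(φ(t,x)) is non-increasing for every x ∈ Ω. Then for every ε, R > 0 there exists T(ε,R) > 0 such that |h(φ(t,x₀))| ≤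 ε for all x₀ ∈ Ω with |x₀| < R and all t ≥ T(ε,R) (uniform output attractivity). -/
open MeasureTheory Filter Set

/-- Theorem 1 / Theorem 4 (finite-dimensional version): Lyapunov conditions for uniform
output attractivity.  `φ` is a semiflow on a positively invariant set `Ω ⊆ ℝⁿ` containing
`0`, with continuous output map `h`.  If `a(|h(x)|) ≤ W(x)`, `V` dissipates at rate
`ρ(W(φ(s,x)))`, `V + W` is bounded on bounded subsets of `Ω`, and `W` is non-increasing
along solutions, then the output converges to zero uniformly on bounded sets. -/
theorem stmt9 {n k : ℕ}
    (Ω : Set (EuclideanSpace ℝ (Fin n)))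
    (φ : ℝ → EuclideanSpace ℝ (Fin n) → EuclideanSpace ℝ (Fin n))
    (h : EuclideanSpace ℝ (Fin n) → EuclideanSpace ℝ (Fin k))
    (hΩ0 : (0 : EuclideanSpace ℝ (Fin n)) ∈ Ω)
    (hinv : ∀ t ≥ (0:ℝ), ∀ x ∈ Ω, φ t x ∈ Ω)
    (hid : ∀ x ∈ Ω, φ 0 x = x)
    (hsemi : ∀ s ≥ (0:ℝ), ∀ t ≥ (0:ℝ), ∀ x ∈ Ω, φ t (φ s x) = φ (t + s) x)
    (hhc : ContinuousOn h Ω) (hh0 : h 0 = 0)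
    (a : ℝ → ℝ)
    (ha : ContinuousOn a (Ici 0) ∧ StrictMonoOn a (Ici 0) ∧ a 0 = 0 ∧
      Tendsto a atTop atTop)
    (V W : EuclideanSpace ℝ (Fin n) → ℝ)
    (hVWnn : ∀ x ∈ Ω, 0 ≤ V x ∧ 0 ≤ W x)
    (hsup : ∀ s ≥ (0:ℝ), ∃ C : ℝ, ∀ x ∈ Ω, ‖x‖ ≤ s → V x + W x ≤ C)
    (ρ : ℝ → ℝ)
    (hρ : ContinuousOn ρ (Ici 0) ∧ ρ 0 = 0 ∧ ∀ s > (0:ℝ), 0 < ρ s)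
    (hW : ∀ x ∈ Ω, a ‖h x‖ ≤ W x)
    (hV : ∀ x ∈ Ω, ∀ t ≥ (0:ℝ), V (φ t x) ≤ V x - ∫ s in (0:ℝ)..t, ρ (W (φ s x)))
    (hWmono : ∀ x ∈ Ω, ∀ s t : ℝ, 0 ≤ s → s ≤ t → W (φ t x) ≤ W (φ s x)) :
    ∀ ε > (0:ℝ), ∀ R > (0:ℝ), ∃ T > (0:ℝ), ∀ x₀ ∈ Ω, ‖x₀‖ < R →
      ∀ t ≥ T, ‖h (φ t x₀)‖ ≤ ε := by
  obtain ⟨haC, haMono, ha0, -⟩ := ha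
  obtain ⟨hρC, hρ0, hρpos⟩ := hρ
  intro ε hε R hR
  obtain ⟨C, hC⟩ := hsup R hR.le
  have hC0 : 0 ≤ C := by
    have h1 := hC 0 hΩ0 (by simp [hR.le])
    have h2 := hVWnn 0 hΩ0
    linarith [h2.1, h2.2]
  set δ := a ε with hδdef
  have hδpos : 0 < δ := by
    have := haMono self_mem_Ici (mem_Ici.2 hε.le) hε
    simpa [ha0] using this
  set ρ' : ℝ → ℝ := fun s => ρ (max s 0) with hρ'def
  have hρ'cont : Continuous ρ' :=
    hρC.comp_continuous (continuous_id.max continuous_const) (fun x => mem_Ici.2 (le_max_right _ _))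
  have hρ'eq : ∀ s, 0 ≤ s → ρ' s = ρ s := by
    intro s hs; simp [hρ'def, max_eq_left hs]
  have hρ'nonneg : ∀ s, 0 ≤ ρ' s := by
    intro s
    rcases eq_or_lt_of_le (le_max_right s 0) with h1 | h1
    · simp [hρ'def, ← h1, hρ0]
    · exact (hρpos _ h1).le
  -- final step lemma, given W (φ t x₀) ≤ δ
  have final : ∀ x₀ ∈ Ω, ∀ t ≥ (0:ℝ), W (φ t x₀) ≤ δ → ‖h (φ t x₀)‖ ≤ ε := by
    intro x₀ hx₀ t ht hWt
    by_contra hcon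
    push_neg at hcon
    have h1 := haMono (mem_Ici.2 hε.le) (mem_Ici.2 (norm_nonneg _)) hcon
    have h2 := hW _ (hinv t ht x₀ hx₀)
    linarith
  by_cases hcase : δ ≤ C
  · obtain ⟨y, hy, hymin⟩ :=
      isCompact_Icc.exists_isMinOn (nonempty_Icc.2 hcase) hρ'cont.continuousOn
    set m := ρ' y with hmdef
    have hm : 0 < m := by
      rw [hmdef, hρ'eq y (hδpos.le.trans hy.1)]
      exact hρpos y (lt_of_lt_of_le hδpos hy.1)
    refine ⟨C / m + 1, by positivity, ?_⟩
    intro x₀ hx₀ hx₀R t ht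
    set T : ℝ := C / m + 1 with hTdef
    have hT : 0 < T := by positivity
    have hVx₀ : V x₀ ≤ C :=
      le_trans (le_add_of_nonneg_right (hVWnn x₀ hx₀).2) (hC x₀ hx₀ hx₀R.le)
    have hWx₀ : W x₀ ≤ C :=
      le_trans (le_add_of_nonneg_left (hVWnn x₀ hx₀).1) (hC x₀ hx₀ hx₀R.le)
    have key : W (φ T x₀) ≤ δ := by
      by_contra hcon
      push_neg at hcon
      set g : ℝ → ℝ := fun s => W (φ (max s 0) x₀) with hgdef
      have hganti : Antitone g := fun s t hst =>
        hWmono x₀ hx₀ _ _ (le_max_right _ _) (max_le_max hst le_rfl)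
      have hgmeas : Measurable g := hganti.measurable
      have hgnn : ∀ s, 0 ≤ g s := fun s =>
        (hVWnn _ (hinv _ (le_max_right _ _) x₀ hx₀)).2
      have hgC : ∀ s, g s ≤ C := by
        intro s
        have h1 := hWmono x₀ hx₀ 0 (max s 0) le_rfl (le_max_right _ _)
        rw [hid x₀ hx₀] at h1
        linarith
      have hglB : ∀ s ∈ Icc (0:ℝ) T, δ < g s := by
        intro s hs
        have h1 : W (φ T x₀) ≤ g s :=
          hWmono x₀ hx₀ (max s 0) T (le_max_right _ _)
            (by rw [max_eq_left hs.1]; exact hs.2)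
        linarith
      have hmeas : Measurable (fun s => ρ' (g s)) := hρ'cont.measurable.comp hgmeas
      obtain ⟨z, hz, hzmax⟩ :=
        isCompact_Icc.exists_isMaxOn (nonempty_Icc.2 hC0) hρ'cont.continuousOn
      have hint : IntervalIntegrable (fun s => ρ' (g s)) volume 0 T := by
        apply IntervalIntegrable.mono_fun (intervalIntegrable_const (c := ρ' z))
          hmeas.aestronglyMeasurable
        refine Eventually.of_forall (fun s => ?_)
        show ‖ρ' (g s)‖ ≤ ‖ρ' z‖
        rw [Real.norm_of_nonneg (hρ'nonneg _), Real.norm_of_nonneg (hρ'nonneg _)]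
        exact hzmax ⟨hgnn s, hgC s⟩
      have hmono : ∀ s ∈ Icc (0:ℝ) T, m ≤ ρ' (g s) := by
        intro s hs
        exact hymin ⟨(hglB s hs).le, hgC s⟩
      have hlow : T * m ≤ ∫ s in (0:ℝ)..T, ρ' (g s) := by
        have h1 := intervalIntegral.integral_mono_on hT.le
          (intervalIntegrable_const (c := m)) hint hmono
        simpa [mul_comm] using h1
      have heq : (∫ s in (0:ℝ)..T, ρ (W (φ s x₀))) = ∫ s in (0:ℝ)..T, ρ' (g s) := by
        apply intervalIntegral.integral_congr
        intro s hs
        rw [uIcc_of_le hT.le] at hs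
        have hgs : g s = W (φ s x₀) := by simp [hgdef, max_eq_left hs.1]
        show ρ (W (φ s x₀)) = ρ' (g s)
        rw [hgs, hρ'eq _ (hgs ▸ hgnn s)]
      have hVT := hV x₀ hx₀ T hT.le
      have hVnn := (hVWnn _ (hinv T hT.le x₀ hx₀)).1
      have hTm : T * m = C + m := by
        rw [hTdef]; field_simp
      rw [heq] at hVT
      linarith
    have hWt : W (φ t x₀) ≤ δ := le_trans (hWmono x₀ hx₀ T t hT.le ht) key
    exact final x₀ hx₀ t (hT.le.trans ht) hWt
  · push_neg at hcase
    refine ⟨1, one_pos, ?_⟩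
    intro x₀ hx₀ hx₀R t ht
    have ht0 : (0:ℝ) ≤ t := le_trans zero_le_one ht
    have hWt : W (φ t x₀) ≤ δ := by
      have h1 := hWmono x₀ hx₀ 0 t le_rfl ht0
      rw [hid x₀ hx₀] at h1
      have h2 := hC x₀ hx₀ hx₀R.le
      have h3 := (hVWnn x₀ hx₀).1
      linarith
    exact final x₀ hx₀ t ht0 hWt
end

section
/- Let φ : ℝ≥0 × Ω → Ω be a semiflow with output map h : Ω → Y, where Ω is a subset of a normed space X containing 0, h(0) = 0 and φ(t,0) = 0. Then the system is Lagrange output stable and Lyapunov output stable on Ω if and only if there exists ζ ∈ K∞ such that ‖h(φ(t,x₀))‖_Y ≤ ζ(‖x₀‖_X) for all x₀ ∈ Ω and t ≥ 0. -/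
open Filter Set intervalIntegral MeasureTheory


/-- Construct a K∞ function dominating a monotone function `g` vanishing on
nonpositives and tending to `0` from the right at `0`. -/
lemma kinf_dominate (g : ℝ → ℝ) (hg : Monotone g) (hg0 : ∀ r ≤ (0:ℝ), g r = 0)
    (hto : Tendsto g (nhdsWithin 0 (Ici 0)) (nhds 0)) :
    ∃ ζ : ℝ → ℝ, (ContinuousOn ζ (Ici 0) ∧ StrictMonoOn ζ (Ici 0) ∧ ζ 0 = 0 ∧
        Tendsto ζ atTop atTop) ∧ ∀ r ≥ (0:ℝ), g r ≤ ζ r := by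
  have hgnn : ∀ r, 0 ≤ g r := by
    intro r
    rcases le_or_gt r 0 with hr | hr
    · exact (hg0 r hr).ge
    · rw [← hg0 0 le_rfl]; exact hg hr.le
  have hgint : ∀ a b : ℝ, IntervalIntegrable g MeasureTheory.volume a b := fun a b =>
    hg.intervalIntegrable
  set F : ℝ → ℝ := fun x => ∫ s in (0:ℝ)..x, g s with hF
  have hFcont : Continuous F := intervalIntegral.continuous_primitive hgint 0
  set ζ : ℝ → ℝ := fun r => r + r⁻¹ * (F (2*r) - F r) with hζ
  -- integrability of u ↦ g (r*u)
  have hmono : ∀ r ≥ (0:ℝ), Monotone (fun u => g (r*u)) := by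
    intro r hr u v huv
    exact hg (mul_le_mul_of_nonneg_left huv hr)
  have hint : ∀ r ≥ (0:ℝ), IntervalIntegrable (fun u => g (r*u))
      MeasureTheory.volume 1 2 := fun r hr => (hmono r hr).intervalIntegrable
  -- key representation
  have key : ∀ r ≥ (0:ℝ), ζ r = r + ∫ u in (1:ℝ)..2, g (r*u) := by
    intro r hr
    rcases eq_or_lt_of_le hr with hr0 | hr0
    · simp [hζ, ← hr0, hg0 0 le_rfl]
    · have := intervalIntegral.integral_comp_mul_left g (a := 1) (b := 2) (ne_of_gt hr0)
      rw [hζ]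
      simp only [this, smul_eq_mul, mul_one]
      have : ∫ x in r..r*2, g x = F (2*r) - F r := by
        rw [hF]
        rw [show r*2 = 2*r by ring]
        rw [← intervalIntegral.integral_interval_sub_left (hgint 0 (2*r)) (hgint 0 r)]
      rw [this]
  have hlow : ∀ r ≥ (0:ℝ), r + g r ≤ ζ r := by
    intro r hr
    rw [key r hr]
    have : g r = ∫ _u in (1:ℝ)..2, g r := by norm_num
    rw [this]
    refine (add_le_add_iff_left r).2 (intervalIntegral.integral_mono_on (by norm_num)
      intervalIntegrable_const (hint r hr) ?_)
    intro u hu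
    exact hg (le_mul_of_one_le_right hr hu.1)
  have hup : ∀ r ≥ (0:ℝ), ζ r ≤ r + g (2*r) := by
    intro r hr
    rw [key r hr]
    have : g (2*r) = ∫ _u in (1:ℝ)..2, g (2*r) := by norm_num
    rw [this]
    refine (add_le_add_iff_left r).2 (intervalIntegral.integral_mono_on (by norm_num)
      (hint r hr) intervalIntegrable_const ?_)
    intro u hu
    exact hg (by nlinarith [hu.2])
  have hζ0 : ζ 0 = 0 := by simp [hζ]
  have hsm : StrictMonoOn ζ (Ici 0) := by
    intro a ha b hb hab
    rw [key a ha, key b hb]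
    have h1 : (∫ u in (1:ℝ)..2, g (a*u)) ≤ ∫ u in (1:ℝ)..2, g (b*u) := by
      refine intervalIntegral.integral_mono_on (by norm_num) (hint a ha) (hint b hb) ?_
      intro u hu
      exact hg (mul_le_mul_of_nonneg_right hab.le (le_trans zero_le_one hu.1))
    linarith
  have hnl : ∀ r ≥ (0:ℝ), r ≤ ζ r := fun r hr =>
    le_trans (le_add_of_nonneg_right (hgnn r)) (hlow r hr)
  have hat : Tendsto ζ atTop atTop := by
    refine tendsto_atTop_mono' atTop ?_ tendsto_id
    filter_upwards [eventually_ge_atTop (0:ℝ)] with r hr using hnl r hr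
  have hcont : ContinuousOn ζ (Ici 0) := by
    intro r hr
    rcases eq_or_lt_of_le (mem_Ici.mp hr) with hr0 | hr0
    · -- continuity at 0 within Ici 0, by squeeze
      rw [ContinuousWithinAt, ← hr0, hζ0]
      have h2 : Tendsto (fun r : ℝ => g (2*r)) (nhdsWithin 0 (Ici 0)) (nhds 0) := by
        refine hto.comp ?_
        refine tendsto_nhdsWithin_of_tendsto_nhds_of_eventually_within _ ?_ ?_
        · have : Tendsto (fun r : ℝ => 2*r) (nhds 0) (nhds (2*0)) :=
            (continuous_const.mul continuous_id).tendsto 0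
          simpa using this.mono_left nhdsWithin_le_nhds
        · filter_upwards [self_mem_nhdsWithin] with x hx
          exact mul_nonneg (by norm_num : (0:ℝ) ≤ 2) hx
      have hub : Tendsto (fun r : ℝ => r + g (2*r)) (nhdsWithin 0 (Ici 0)) (nhds 0) := by
        have := (tendsto_id.mono_left nhdsWithin_le_nhds).add h2
        simpa using this
      refine tendsto_of_tendsto_of_tendsto_of_le_of_le' tendsto_const_nhds hub ?_ ?_
      · filter_upwards [self_mem_nhdsWithin] with x hx
        exact le_trans hx (hnl x hx)
      · filter_upwards [self_mem_nhdsWithin] with x hx using hup x hx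
    · refine ContinuousAt.continuousWithinAt ?_
      refine continuousAt_id.add (ContinuousAt.mul ?_ ?_)
      · exact continuousAt_inv₀ (ne_of_gt hr0)
      · exact ((hFcont.comp (continuous_const.mul continuous_id)).sub hFcont).continuousAt
  exact ⟨ζ, ⟨hcont, hsm, hζ0, hat⟩, fun r hr =>
    le_trans (le_add_of_nonneg_left hr) (hlow r hr)⟩
/-- Lemma 4: a semiflow with output on `Ω ⊆ X` is Lagrange output stable and Lyapunov
output stable on `Ω` if and only if there exists `ζ ∈ K∞` such that
`‖h(φ(t,x₀))‖_Y ≤ ζ(‖x₀‖_X)` for all `x₀ ∈ Ω` and `t ≥ 0`. -/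
theorem stmt11 {X Y : Type*} [NormedAddCommGroup X] [NormedAddCommGroup Y]
    (Ω : Set X) (φ : ℝ → X → X) (h : X → Y)
    (hΩ0 : (0:X) ∈ Ω)
    (hinv : ∀ t ≥ (0:ℝ), ∀ x ∈ Ω, φ t x ∈ Ω)
    (hid : ∀ x ∈ Ω, φ 0 x = x)
    (hsemi : ∀ s ≥ (0:ℝ), ∀ t ≥ (0:ℝ), ∀ x ∈ Ω, φ t (φ s x) = φ (t + s) x)
    (hφ0 : ∀ t ≥ (0:ℝ), φ t 0 = 0) (hh0 : h 0 = 0) :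
    -- Lagrange output stability ∧ Lyapunov output stability
    ((∀ R > (0:ℝ), ∃ C : ℝ, ∀ x₀ ∈ Ω, ‖x₀‖ < R → ∀ t ≥ (0:ℝ), ‖h (φ t x₀)‖ ≤ C) ∧
     (∀ ε > (0:ℝ), ∃ δ > (0:ℝ), ∀ x₀ ∈ Ω, ‖x₀‖ < δ → ∀ t ≥ (0:ℝ), ‖h (φ t x₀)‖ ≤ ε))
    ↔
    -- existence of a K∞ bound
    (∃ ζ : ℝ → ℝ, (ContinuousOn ζ (Ici 0) ∧ StrictMonoOn ζ (Ici 0) ∧ ζ 0 = 0 ∧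
        Tendsto ζ atTop atTop) ∧
      ∀ x₀ ∈ Ω, ∀ t ≥ (0:ℝ), ‖h (φ t x₀)‖ ≤ ζ ‖x₀‖) := by
  constructor
  · rintro ⟨hLag, hLya⟩
    -- the worst-case output gain
    set S : ℝ → Set ℝ := fun r =>
      {v | ∃ x₀ ∈ Ω, ‖x₀‖ ≤ r ∧ ∃ t ≥ (0:ℝ), v = ‖h (φ t x₀)‖} with hS
    set g : ℝ → ℝ := fun r => sSup (S r) with hgdef
    have hmem0 : ∀ r ≥ (0:ℝ), (0:ℝ) ∈ S r := by
      intro r hr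
      exact ⟨0, hΩ0, by simpa using hr, 0, le_rfl, by rw [hφ0 0 le_rfl, hh0, norm_zero]⟩
    have hbdd : ∀ r : ℝ, BddAbove (S r) := by
      intro r
      rcases lt_or_ge r 0 with hr | hr
      · refine ⟨0, ?_⟩
        rintro v ⟨x₀, _, hx, _⟩
        exact absurd (lt_of_le_of_lt hx hr) (not_lt.2 (norm_nonneg x₀))
      · obtain ⟨C, hC⟩ := hLag (r+1) (by linarith)
        refine ⟨C, ?_⟩
        rintro v ⟨x₀, hx₀, hx, t, ht, rfl⟩
        exact hC x₀ hx₀ (by linarith) t ht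
    have hSsub : ∀ ⦃a b : ℝ⦄, a ≤ b → S a ⊆ S b := by
      rintro a b hab v ⟨x₀, hx₀, hx, t, ht, rfl⟩
      exact ⟨x₀, hx₀, le_trans hx hab, t, ht, rfl⟩
    have hgmono : Monotone g := by
      intro a b hab
      rcases lt_or_ge a 0 with ha | ha
      · have hSa : S a = ∅ := by
          ext v
          simp only [hS, mem_setOf_eq, mem_empty_iff_false, iff_false]
          rintro ⟨x₀, _, hx, _⟩
          exact absurd (lt_of_le_of_lt hx ha) (not_lt.2 (norm_nonneg x₀))
        rw [hgdef]
        simp only [hSa, Real.sSup_empty]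
        rcases lt_or_ge b 0 with hb | hb
        · have hSb : S b = ∅ := by
            ext v
            simp only [hS, mem_setOf_eq, mem_empty_iff_false, iff_false]
            rintro ⟨x₀, _, hx, _⟩
            exact absurd (lt_of_le_of_lt hx hb) (not_lt.2 (norm_nonneg x₀))
          simp [hSb, Real.sSup_empty]
        · exact le_csSup (hbdd b) (hmem0 b hb)
      · exact csSup_le_csSup (hbdd b) ⟨0, hmem0 a ha⟩ (hSsub hab)
    have hg0 : ∀ r ≤ (0:ℝ), g r = 0 := by
      intro r hr
      rcases lt_or_ge r 0 with hr' | hr'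
      · have hSr : S r = ∅ := by
          ext v
          simp only [hS, mem_setOf_eq, mem_empty_iff_false, iff_false]
          rintro ⟨x₀, _, hx, _⟩
          exact absurd (lt_of_le_of_lt hx hr') (not_lt.2 (norm_nonneg x₀))
        simp [hgdef, hSr, Real.sSup_empty]
      · have hr0 : r = 0 := le_antisymm hr hr'
        subst hr0
        refine le_antisymm (csSup_le ⟨0, hmem0 0 le_rfl⟩ ?_) (le_csSup (hbdd 0) (hmem0 0 le_rfl))
        rintro v ⟨x₀, _, hx, t, ht, rfl⟩
        have : x₀ = 0 := norm_le_zero_iff.mp hx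
        subst this
        rw [hφ0 t ht, hh0, norm_zero]
    have hto : Tendsto g (nhdsWithin 0 (Ici 0)) (nhds 0) := by
      rw [Metric.tendsto_nhdsWithin_nhds]
      intro ε hε
      obtain ⟨δ, hδ, hδ'⟩ := hLya (ε/2) (by linarith)
      refine ⟨δ, hδ, ?_⟩
      intro r hr hrd
      have hrd' : r < δ := by
        rwa [Real.dist_eq, sub_zero, abs_of_nonneg hr] at hrd
      have hgle : g r ≤ ε/2 := by
        refine csSup_le ⟨0, hmem0 r hr⟩ ?_
        rintro v ⟨x₀, hx₀, hx, t, ht, rfl⟩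
        exact hδ' x₀ hx₀ (lt_of_le_of_lt hx hrd') t ht
      have hgnn : 0 ≤ g r := le_csSup (hbdd r) (hmem0 r hr)
      rw [Real.dist_eq, sub_zero, abs_of_nonneg hgnn]
      linarith
    obtain ⟨ζ, hζprop, hζge⟩ := kinf_dominate g hgmono hg0 hto
    refine ⟨ζ, hζprop, ?_⟩
    intro x₀ hx₀ t ht
    refine le_trans ?_ (hζge ‖x₀‖ (norm_nonneg x₀))
    exact le_csSup (hbdd ‖x₀‖) ⟨x₀, hx₀, le_rfl, t, ht, rfl⟩
  · rintro ⟨ζ, ⟨hcont, hsm, hζ0, _⟩, hb⟩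
    constructor
    · intro R hR
      refine ⟨ζ R, ?_⟩
      intro x₀ hx₀ hxR t ht
      refine le_trans (hb x₀ hx₀ t ht) ?_
      exact hsm.monotoneOn (norm_nonneg x₀) hR.le hxR.le
    · intro ε hε
      have := hcont 0 (le_refl (0:ℝ))
      rw [ContinuousWithinAt, Metric.tendsto_nhdsWithin_nhds] at this
      obtain ⟨δ, hδ, hδ'⟩ := this ε hε
      refine ⟨δ, hδ, ?_⟩
      intro x₀ hx₀ hxδ t ht
      refine le_trans (hb x₀ hx₀ t ht) ?_
      have := hδ' (x := ‖x₀‖) (norm_nonneg x₀)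
        (by rwa [Real.dist_eq, sub_zero, abs_of_nonneg (norm_nonneg x₀)])
      rw [hζ0, Real.dist_eq, sub_zero] at this
      exact (le_abs_self _).trans this.le
end

section
/- Let φ : ℝ≥0 × Ω → Ω be a semiflow with output h : Ω → Y on Ω ⊆ X a normed space, 0 ∈ Ω, h(0) = 0, φ(t,0) = 0. Then the system is uniformly asymptotically output stable on Ω if and only if there exists σ ∈ KL such that ‖h(φ(t,x₀))‖_Y ≤ σ(‖x₀‖_X, t) for all x₀ ∈ Ω and t ≥ 0. -/
open Filter Set

noncomputable def cl (u : ℝ) : ℝ := max 0 (min 1 u)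
lemma cl_nonneg (u : ℝ) : 0 ≤ cl u := le_max_left _ _
lemma cl_le_one (u : ℝ) : cl u ≤ 1 := max_le zero_le_one (min_le_left _ _)
lemma cl_mono : Monotone cl := fun _ _ hab => max_le_max le_rfl (min_le_min le_rfl hab)
lemma cl_of_nonpos {u : ℝ} (hu : u ≤ 0) : cl u = 0 := max_eq_left ((min_le_right _ _).trans hu)
lemma cl_one : cl 1 = 1 := by norm_num [cl]
lemma cl_lip (a b : ℝ) : |cl a - cl b| ≤ |a - b| := by
  have key : ∀ x y : ℝ, cl x - cl y ≤ |x - y| := by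
    intro x y
    have habs : x - y ≤ |x - y| := le_abs_self _
    have habs0 : (0:ℝ) ≤ |x - y| := abs_nonneg _
    rcases le_total x 0 with hx | hx
    · rw [cl_of_nonpos hx]
      have := cl_nonneg y; linarith
    · have hclx : cl x = min 1 x := max_eq_right (le_min zero_le_one hx)
      rcases le_total y 0 with hy | hy
      · rw [cl_of_nonpos hy, hclx]
        have h1 : min 1 x ≤ x := min_le_right _ _
        linarith
      · have hcly : cl y = min 1 y := max_eq_right (le_min zero_le_one hy)
        rw [hclx, hcly]
        rcases le_total x y with hxy | hxy
        · have h1 : min 1 x ≤ min 1 y := min_le_min le_rfl hxy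
          linarith
        · rcases le_total 1 y with hy1 | hy1
          · rw [min_eq_left (by linarith : (1:ℝ) ≤ x), min_eq_left hy1]
            linarith
          · rw [min_eq_right hy1]
            have h1 : min 1 x ≤ x := min_le_right _ _
            linarith
  rw [abs_sub_le_iff]
  exact ⟨key a b, by rw [abs_sub_comm]; exact key b a⟩

lemma lin_helper {A B M C ds dt ε : ℝ} (hM : 0 ≤ M) (hC : 0 ≤ C)
    (k1 : A ≤ B + M * ds + C * dt) (k2 : B ≤ A + M * ds + C * dt)
    (hds : ds < ε / (M + C + 1)) (hdt : dt < ε / (M + C + 1)) (hε : 0 < ε) :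
    |A - B| < ε := by
  have hKpos : (0:ℝ) < M + C + 1 := by linarith
  have h1 : M * ds ≤ M * (ε / (M + C + 1)) := mul_le_mul_of_nonneg_left hds.le hM
  have h2 : C * dt ≤ C * (ε / (M + C + 1)) := mul_le_mul_of_nonneg_left hdt.le hC
  have he : (0:ℝ) < ε / (M + C + 1) := div_pos hε hKpos
  have h4 : (M + C + 1) * (ε / (M + C + 1)) = ε := by field_simp
  have h3 : M * (ε / (M + C + 1)) + C * (ε / (M + C + 1)) < ε := by nlinarith
  rw [abs_sub_lt_iff]
  constructor <;> linarith

section Main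

variable {X Y : Type*} [NormedAddCommGroup X] [NormedAddCommGroup Y]
variable (Ω : Set X) (φ : ℝ → X → X) (h : X → Y)

def ES (s t : ℝ) : Set ℝ :=
  {v | ∃ x ∈ Ω, ∃ τ : ℝ, 0 ≤ τ ∧ v = ‖h (φ τ x)‖ * (cl (2 - ‖x‖ / s) * cl (1 + τ - t))}

noncomputable def sig0 (s t : ℝ) : ℝ := if s ≤ 0 then 0 else sSup (ES Ω φ h s t)

noncomputable def sig (s t : ℝ) : ℝ := sig0 Ω φ h s t + s / (1 + t)

lemma ES_elem_nonneg {s t : ℝ} : ∀ v ∈ ES Ω φ h s t, 0 ≤ v := by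
  rintro v ⟨x, _, τ, _, rfl⟩
  exact mul_nonneg (norm_nonneg _) (mul_nonneg (cl_nonneg _) (cl_nonneg _))

lemma sig0_nonneg (s t : ℝ) : 0 ≤ sig0 Ω φ h s t := by
  unfold sig0; split
  · exact le_rfl
  · exact Real.sSup_nonneg (ES_elem_nonneg Ω φ h)

lemma ES_le {s t ε : ℝ} (hs : 0 < s) (hε : 0 ≤ ε)
    (H : ∀ x ∈ Ω, ‖x‖ < 2 * s → ∀ τ : ℝ, 0 ≤ τ → t - 1 < τ → ‖h (φ τ x)‖ ≤ ε) :
    ∀ v ∈ ES Ω φ h s t, v ≤ ε := by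
  rintro v ⟨x, hx, τ, hτ, rfl⟩
  rcases le_or_gt (2 * s) ‖x‖ with hbig | hsmall
  · have h2 : (2 : ℝ) ≤ ‖x‖ / s := (le_div_iff₀ hs).2 (by linarith)
    rw [cl_of_nonpos (by linarith), zero_mul, mul_zero]; exact hε
  · rcases le_or_gt τ (t - 1) with ht2 | ht2
    · rw [cl_of_nonpos (show 1 + τ - t ≤ 0 by linarith), mul_zero, mul_zero]; exact hε
    · have hv := H x hx hsmall τ hτ ht2
      have h1 : cl (2 - ‖x‖ / s) * cl (1 + τ - t) ≤ 1 :=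
        mul_le_one₀ (cl_le_one _) (cl_nonneg _) (cl_le_one _)
      have h0 : 0 ≤ cl (2 - ‖x‖ / s) * cl (1 + τ - t) :=
        mul_nonneg (cl_nonneg _) (cl_nonneg _)
      nlinarith [norm_nonneg (h (φ τ x))]

lemma sig0_le {s t ε : ℝ} (hε : 0 ≤ ε)
    (H : ∀ x ∈ Ω, ‖x‖ < 2 * s → ∀ τ : ℝ, 0 ≤ τ → t - 1 < τ → ‖h (φ τ x)‖ ≤ ε) :
    sig0 Ω φ h s t ≤ ε := by
  unfold sig0; split
  · exact hε
  · next hs => exact Real.sSup_le (ES_le Ω φ h (not_le.1 hs) hε H) hε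

lemma ES_bddAbove
    (Lag : ∀ R > (0:ℝ), ∃ C : ℝ, ∀ x₀ ∈ Ω, ‖x₀‖ < R → ∀ t ≥ (0:ℝ), ‖h (φ t x₀)‖ ≤ C)
    {s : ℝ} (hs : 0 < s) (t : ℝ) : BddAbove (ES Ω φ h s t) := by
  obtain ⟨C, hC⟩ := Lag (2 * s + 1) (by linarith)
  refine ⟨max C 0, fun v hv => ?_⟩
  exact ES_le Ω φ h hs (le_max_right _ _)
    (fun x hx hxs τ hτ _ => (hC x hx (by linarith) τ hτ).trans (le_max_left _ _)) v hv

lemma le_sig0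
    (Lag : ∀ R > (0:ℝ), ∃ C : ℝ, ∀ x₀ ∈ Ω, ‖x₀‖ < R → ∀ t ≥ (0:ℝ), ‖h (φ t x₀)‖ ≤ C)
    {x₀ : X} (hx : x₀ ∈ Ω) (hx0 : 0 < ‖x₀‖) {t : ℝ} (ht : 0 ≤ t) :
    ‖h (φ t x₀)‖ ≤ sig0 Ω φ h ‖x₀‖ t := by
  have hmem : ‖h (φ t x₀)‖ ∈ ES Ω φ h ‖x₀‖ t := by
    refine ⟨x₀, hx, t, ht, ?_⟩
    rw [div_self hx0.ne', show (2:ℝ) - 1 = 1 from by norm_num,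
      show 1 + t - t = 1 from by ring, cl_one, one_mul, mul_one]
  rw [sig0, if_neg (not_le.2 hx0)]
  exact le_csSup (ES_bddAbove Ω φ h Lag hx0 t) hmem

lemma sig0_mono
    (Lag : ∀ R > (0:ℝ), ∃ C : ℝ, ∀ x₀ ∈ Ω, ‖x₀‖ < R → ∀ t ≥ (0:ℝ), ‖h (φ t x₀)‖ ≤ C)
    {s₁ s₂ : ℝ} (h12 : s₁ ≤ s₂) (t : ℝ) :
    sig0 Ω φ h s₁ t ≤ sig0 Ω φ h s₂ t := by
  rcases le_or_gt s₁ 0 with h1 | h1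
  · rw [sig0, if_pos h1]; exact sig0_nonneg Ω φ h s₂ t
  · have h2 : 0 < s₂ := lt_of_lt_of_le h1 h12
    rw [sig0, if_neg (not_le.2 h1), sig0, if_neg (not_le.2 h2)]
    refine Real.sSup_le ?_ (Real.sSup_nonneg (ES_elem_nonneg Ω φ h))
    rintro v ⟨x, hx, τ, hτ, rfl⟩
    have hle : ‖h (φ τ x)‖ * (cl (2 - ‖x‖ / s₁) * cl (1 + τ - t)) ≤
        ‖h (φ τ x)‖ * (cl (2 - ‖x‖ / s₂) * cl (1 + τ - t)) := by
      have hd : ‖x‖ / s₂ ≤ ‖x‖ / s₁ := by gcongr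
      have hm := cl_mono (show 2 - ‖x‖ / s₁ ≤ 2 - ‖x‖ / s₂ by linarith)
      exact mul_le_mul_of_nonneg_left
        (mul_le_mul_of_nonneg_right hm (cl_nonneg _)) (norm_nonneg _)
    exact hle.trans (le_csSup (ES_bddAbove Ω φ h Lag h2 t) ⟨x, hx, τ, hτ, rfl⟩)

lemma sig0_anti
    (Lag : ∀ R > (0:ℝ), ∃ C : ℝ, ∀ x₀ ∈ Ω, ‖x₀‖ < R → ∀ t ≥ (0:ℝ), ‖h (φ t x₀)‖ ≤ C)
    {t₁ t₂ : ℝ} (h12 : t₁ ≤ t₂) (s : ℝ) :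
    sig0 Ω φ h s t₂ ≤ sig0 Ω φ h s t₁ := by
  rcases le_or_gt s 0 with h1 | h1
  · rw [sig0, if_pos h1, sig0, if_pos h1]
  · rw [sig0, if_neg (not_le.2 h1), sig0, if_neg (not_le.2 h1)]
    refine Real.sSup_le ?_ (Real.sSup_nonneg (ES_elem_nonneg Ω φ h))
    rintro v ⟨x, hx, τ, hτ, rfl⟩
    have hle : ‖h (φ τ x)‖ * (cl (2 - ‖x‖ / s) * cl (1 + τ - t₂)) ≤
        ‖h (φ τ x)‖ * (cl (2 - ‖x‖ / s) * cl (1 + τ - t₁)) := by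
      have hm := cl_mono (show 1 + τ - t₂ ≤ 1 + τ - t₁ by linarith)
      exact mul_le_mul_of_nonneg_left
        (mul_le_mul_of_nonneg_left hm (cl_nonneg _)) (norm_nonneg _)
    exact hle.trans (le_csSup (ES_bddAbove Ω φ h Lag h1 t₁) ⟨x, hx, τ, hτ, rfl⟩)


lemma sig0_dist
    (Lag : ∀ R > (0:ℝ), ∃ C : ℝ, ∀ x₀ ∈ Ω, ‖x₀‖ < R → ∀ t ≥ (0:ℝ), ‖h (φ t x₀)‖ ≤ C)
    {s s' t t' C : ℝ} (hs : 0 < s) (hs' : 0 < s') (hC : 0 ≤ C)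
    (H : ∀ x ∈ Ω, ‖x‖ < 2 * max s s' → ∀ τ : ℝ, 0 ≤ τ → ‖h (φ τ x)‖ ≤ C) :
    sig0 Ω φ h s t ≤ sig0 Ω φ h s' t'
      + C * (2 * max s s' / (s * s')) * |s - s'| + C * |t - t'| := by
  have hrhs0 : (0:ℝ) ≤ sig0 Ω φ h s' t'
      + C * (2 * max s s' / (s * s')) * |s - s'| + C * |t - t'| := by
    have h1 := sig0_nonneg Ω φ h s' t'
    have h2 : (0:ℝ) ≤ C * (2 * max s s' / (s * s')) * |s - s'| := by
      apply mul_nonneg (mul_nonneg hC _) (abs_nonneg _)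
      apply div_nonneg _ (mul_pos hs hs').le
      have : (0:ℝ) < max s s' := lt_max_of_lt_left hs
      linarith
    have h3 : (0:ℝ) ≤ C * |t - t'| := mul_nonneg hC (abs_nonneg _)
    linarith
  rw [sig0, if_neg (not_le.2 hs)]
  refine Real.sSup_le ?_ hrhs0
  rintro v ⟨x, hx, τ, hτ, rfl⟩
  rcases le_or_gt (2 * max s s') ‖x‖ with hbig | hsmall
  · have hss : 2 * s ≤ 2 * max s s' := by
      have := le_max_left s s'; linarith
    have h2 : (2 : ℝ) ≤ ‖x‖ / s := (le_div_iff₀ hs).2 (by linarith)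
    rw [cl_of_nonpos (by linarith), zero_mul, mul_zero]
    exact hrhs0
  · have hval : ‖h (φ τ x)‖ ≤ C := H x hx hsmall τ hτ
    have hv' : ‖h (φ τ x)‖ * (cl (2 - ‖x‖ / s') * cl (1 + τ - t')) ≤ sig0 Ω φ h s' t' := by
      rw [sig0, if_neg (not_le.2 hs')]
      exact le_csSup (ES_bddAbove Ω φ h Lag hs' t') ⟨x, hx, τ, hτ, rfl⟩
    have h0v : (0:ℝ) ≤ ‖h (φ τ x)‖ := norm_nonneg _
    have ha : |cl (2 - ‖x‖ / s) - cl (2 - ‖x‖ / s')| ≤ 2 * max s s' / (s * s') * |s - s'| := by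
      have h1 := cl_lip (2 - ‖x‖ / s) (2 - ‖x‖ / s')
      have h2 : (2 - ‖x‖ / s) - (2 - ‖x‖ / s') = ‖x‖ * (s - s') / (s * s') := by
        field_simp; ring
      rw [h2] at h1
      refine h1.trans ?_
      have hpos : (0:ℝ) < s * s' := mul_pos hs hs'
      rw [abs_div, abs_mul, abs_of_pos hpos, abs_of_nonneg (norm_nonneg x),
        div_mul_eq_mul_div]
      gcongr
    have hb : |cl (1 + τ - t) - cl (1 + τ - t')| ≤ |t - t'| := by
      have h1 := cl_lip (1 + τ - t) (1 + τ - t')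
      calc |cl (1 + τ - t) - cl (1 + τ - t')| ≤ |(1 + τ - t) - (1 + τ - t')| := h1
        _ = |t - t'| := by rw [show (1 + τ - t) - (1 + τ - t') = t' - t by ring, abs_sub_comm]
    have e2 : ‖h (φ τ x)‖ * (cl (2 - ‖x‖ / s) - cl (2 - ‖x‖ / s')) * cl (1 + τ - t)
        ≤ C * (2 * max s s' / (s * s')) * |s - s'| := by
      have step1 : ‖h (φ τ x)‖ * (cl (2 - ‖x‖ / s) - cl (2 - ‖x‖ / s')) * cl (1 + τ - t)
          ≤ ‖h (φ τ x)‖ * |cl (2 - ‖x‖ / s) - cl (2 - ‖x‖ / s')| := by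
        have hle := le_abs_self (cl (2 - ‖x‖ / s) - cl (2 - ‖x‖ / s'))
        have hb0 := cl_nonneg (1 + τ - t)
        have hb1 := cl_le_one (1 + τ - t)
        have habs0 := abs_nonneg (cl (2 - ‖x‖ / s) - cl (2 - ‖x‖ / s'))
        calc ‖h (φ τ x)‖ * (cl (2 - ‖x‖ / s) - cl (2 - ‖x‖ / s')) * cl (1 + τ - t)
            ≤ ‖h (φ τ x)‖ * |cl (2 - ‖x‖ / s) - cl (2 - ‖x‖ / s')| * cl (1 + τ - t) :=
              mul_le_mul_of_nonneg_right (mul_le_mul_of_nonneg_left hle h0v) hb0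
          _ ≤ ‖h (φ τ x)‖ * |cl (2 - ‖x‖ / s) - cl (2 - ‖x‖ / s')| * 1 :=
              mul_le_mul_of_nonneg_left hb1 (mul_nonneg h0v habs0)
          _ = ‖h (φ τ x)‖ * |cl (2 - ‖x‖ / s) - cl (2 - ‖x‖ / s')| := mul_one _
      refine step1.trans ?_
      calc ‖h (φ τ x)‖ * |cl (2 - ‖x‖ / s) - cl (2 - ‖x‖ / s')|
          ≤ C * (2 * max s s' / (s * s') * |s - s'|) :=
            mul_le_mul hval ha (abs_nonneg _) hC
        _ = C * (2 * max s s' / (s * s')) * |s - s'| := by ring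
    have e3 : ‖h (φ τ x)‖ * cl (2 - ‖x‖ / s') * (cl (1 + τ - t) - cl (1 + τ - t'))
        ≤ C * |t - t'| := by
      have hvc : ‖h (φ τ x)‖ * cl (2 - ‖x‖ / s') ≤ C := by
        calc ‖h (φ τ x)‖ * cl (2 - ‖x‖ / s') ≤ ‖h (φ τ x)‖ * 1 :=
              mul_le_mul_of_nonneg_left (cl_le_one _) h0v
          _ = ‖h (φ τ x)‖ := mul_one _
          _ ≤ C := hval
      have hvc0 : (0:ℝ) ≤ ‖h (φ τ x)‖ * cl (2 - ‖x‖ / s') := mul_nonneg h0v (cl_nonneg _)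
      have hle := le_abs_self (cl (1 + τ - t) - cl (1 + τ - t'))
      calc ‖h (φ τ x)‖ * cl (2 - ‖x‖ / s') * (cl (1 + τ - t) - cl (1 + τ - t'))
          ≤ ‖h (φ τ x)‖ * cl (2 - ‖x‖ / s') * |cl (1 + τ - t) - cl (1 + τ - t')| := by
            apply mul_le_mul_of_nonneg_left hle hvc0
        _ ≤ C * |t - t'| := mul_le_mul hvc hb (abs_nonneg _) hC
    nlinarith [hv', e2, e3]


lemma sig_contOn
    (Lag : ∀ R > (0:ℝ), ∃ C : ℝ, ∀ x₀ ∈ Ω, ‖x₀‖ < R → ∀ t ≥ (0:ℝ), ‖h (φ t x₀)‖ ≤ C)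
    (Lya : ∀ ε > (0:ℝ), ∃ δ > (0:ℝ), ∀ x₀ ∈ Ω, ‖x₀‖ < δ → ∀ t ≥ (0:ℝ), ‖h (φ t x₀)‖ ≤ ε) :
    ContinuousOn (fun q : ℝ × ℝ => sig Ω φ h q.1 q.2) (Ici 0 ×ˢ Ici 0) := by
  have hc2 : ContinuousOn (fun q : ℝ × ℝ => q.1 / (1 + q.2)) (Ici (0:ℝ) ×ˢ Ici (0:ℝ)) := by
    apply ContinuousOn.div continuous_fst.continuousOn
      (continuous_const.add continuous_snd).continuousOn
    intro p hp
    have : (0:ℝ) ≤ p.2 := hp.2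
    exact (show (0:ℝ) < 1 + p.2 by linarith).ne'
  have hc1 : ContinuousOn (fun q : ℝ × ℝ => sig0 Ω φ h q.1 q.2) (Ici 0 ×ˢ Ici 0) := by
    intro p hp
    have hp1 : (0:ℝ) ≤ p.1 := hp.1
    rw [Metric.continuousWithinAt_iff]
    rcases eq_or_lt_of_le hp1 with h0 | h0
    · -- boundary point p.1 = 0
      intro ε hε
      obtain ⟨δ₀, hδ₀, hδ⟩ := Lya (ε / 2) (by linarith)
      refine ⟨δ₀ / 2, by linarith, ?_⟩
      intro q hq hdist
      have hq1 : (0:ℝ) ≤ q.1 := hq.1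
      have hd1 : |q.1 - p.1| < δ₀ / 2 := by
        have := (abs_sub_abs_le_abs_sub q.1 p.1)
        calc |q.1 - p.1| = dist q.1 p.1 := (Real.dist_eq _ _).symm
          _ ≤ dist q p := le_max_left _ _
          _ < δ₀ / 2 := hdist
      have hq1' : q.1 < δ₀ / 2 := by
        rw [← h0] at hd1
        rwa [sub_zero, abs_of_nonneg hq1] at hd1
      have hsmall : sig0 Ω φ h q.1 q.2 ≤ ε / 2 := by
        apply sig0_le Ω φ h (by linarith)
        intro x hx hxs τ hτ _
        exact hδ x hx (by linarith) τ hτ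
      have hzero : sig0 Ω φ h p.1 p.2 = 0 := by
        rw [sig0, if_pos (le_of_eq h0.symm)]
      rw [Real.dist_eq, hzero, sub_zero, abs_of_nonneg (sig0_nonneg Ω φ h _ _)]
      linarith
    · -- interior in s
      intro ε hε
      obtain ⟨C₀, hC₀⟩ := Lag (4 * p.1) (by linarith)
      obtain ⟨C, hC, hCb⟩ : ∃ C : ℝ, 0 ≤ C ∧
          ∀ x ∈ Ω, ‖x‖ < 4 * p.1 → ∀ τ : ℝ, 0 ≤ τ → ‖h (φ τ x)‖ ≤ C :=
        ⟨max C₀ 0, le_max_right _ _,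
          fun x hx hxs τ hτ => (hC₀ x hx hxs τ hτ).trans (le_max_left _ _)⟩
      have hM : (0:ℝ) ≤ C * (16 / p.1) := by positivity
      refine ⟨min (p.1 / 2) (ε / (C * (16 / p.1) + C + 1)), by positivity, ?_⟩
      intro q hq hdist
      have hq1 : (0:ℝ) ≤ q.1 := hq.1
      have hds : |q.1 - p.1| < min (p.1 / 2) (ε / (C * (16 / p.1) + C + 1)) := by
        calc |q.1 - p.1| = dist q.1 p.1 := (Real.dist_eq _ _).symm
          _ ≤ dist q p := le_max_left _ _
          _ < _ := hdist
      have hdt : |q.2 - p.2| < min (p.1 / 2) (ε / (C * (16 / p.1) + C + 1)) := by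
        calc |q.2 - p.2| = dist q.2 p.2 := (Real.dist_eq _ _).symm
          _ ≤ dist q p := le_max_right _ _
          _ < _ := hdist
      have hds1 : |q.1 - p.1| < p.1 / 2 := lt_of_lt_of_le hds (min_le_left _ _)
      have hds2 : |q.1 - p.1| < ε / (C * (16 / p.1) + C + 1) :=
        lt_of_lt_of_le hds (min_le_right _ _)
      have hdt2 : |q.2 - p.2| < ε / (C * (16 / p.1) + C + 1) :=
        lt_of_lt_of_le hdt (min_le_right _ _)
      have hq1lb : p.1 / 2 < q.1 := by
        have := abs_lt.1 hds1; linarith [this.1]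
      have hq1ub : q.1 < 3 * p.1 / 2 := by
        have := abs_lt.1 hds1; linarith [this.2]
      have hq1pos : 0 < q.1 := lt_trans (by linarith) hq1lb
      have HH : ∀ x ∈ Ω, ‖x‖ < 3 * p.1 → ∀ τ : ℝ, 0 ≤ τ → ‖h (φ τ x)‖ ≤ C :=
        fun x hx hxs τ hτ => hCb x hx (by linarith) τ hτ
      have hcoef : ∀ a b : ℝ, p.1 / 2 < a → a ≤ 3 * p.1 / 2 → p.1 / 2 < b → b ≤ 3 * p.1 / 2 →
          max a b ≤ 3 * p.1 / 2 → C * (2 * max a b / (a * b)) ≤ C * (16 / p.1) := by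
        intro a b ha1 ha2 hb1 hb2 hm
        apply mul_le_mul_of_nonneg_left _ hC
        rw [div_le_div_iff₀ (by nlinarith) (by linarith)]
        nlinarith
      have key : ∀ a b u v : ℝ, 0 < a → 0 < b → p.1 / 2 < a → a ≤ 3 * p.1 / 2 →
          p.1 / 2 < b → b ≤ 3 * p.1 / 2 →
          sig0 Ω φ h a u ≤ sig0 Ω φ h b v
            + C * (16 / p.1) * |a - b| + C * |u - v| := by
        intro a b u v ha hb ha1 ha2 hb1 hb2
        have hmab : max a b ≤ 3 * p.1 / 2 := max_le ha2 hb2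
        have H1 : ∀ x ∈ Ω, ‖x‖ < 2 * max a b → ∀ τ : ℝ, 0 ≤ τ → ‖h (φ τ x)‖ ≤ C := by
          intro x hx hxs τ hτ
          exact HH x hx (by linarith) τ hτ
        have hd := sig0_dist Ω φ h Lag ha hb hC H1 (t := u) (t' := v)
        have hco := hcoef a b ha1 ha2 hb1 hb2 hmab
        have habs := abs_nonneg (a - b)
        have hco2 := mul_le_mul_of_nonneg_right hco habs
        linarith
      have k1 := key q.1 p.1 q.2 p.2 hq1pos (by linarith) hq1lb hq1ub.le (by linarith) (by linarith)
      have k2 := key p.1 q.1 p.2 q.2 (by linarith) hq1pos (by linarith) (by linarith) hq1lb hq1ub.le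
      rw [abs_sub_comm p.1 q.1, abs_sub_comm p.2 q.2] at k2
      rw [Real.dist_eq]
      exact lin_helper hM hC k1 k2 hds2 hdt2 hε
  have : ContinuousOn (fun q : ℝ × ℝ => sig0 Ω φ h q.1 q.2 + q.1 / (1 + q.2))
      (Ici (0:ℝ) ×ˢ Ici (0:ℝ)) := hc1.add hc2
  exact this

lemma sig_tendsto
    (Att : ∀ ε > (0:ℝ), ∀ R > (0:ℝ), ∃ T > (0:ℝ), ∀ x₀ ∈ Ω, ‖x₀‖ < R →
        ∀ t ≥ T, ‖h (φ t x₀)‖ ≤ ε)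
    {s : ℝ} (hs : 0 ≤ s) : Tendsto (sig Ω φ h s) atTop (nhds 0) := by
  have h2 : Tendsto (fun t : ℝ => s / (1 + t)) atTop (nhds 0) :=
    Tendsto.div_atTop tendsto_const_nhds (tendsto_atTop_add_const_left _ 1 tendsto_id)
  have h1 : Tendsto (fun t : ℝ => sig0 Ω φ h s t) atTop (nhds 0) := by
    rcases eq_or_lt_of_le hs with h0 | h0
    · have : (fun t : ℝ => sig0 Ω φ h s t) = fun _ => 0 := by
        funext t; rw [sig0, if_pos (le_of_eq h0.symm)]
      rw [this]; exact tendsto_const_nhds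
    · rw [Metric.tendsto_atTop]
      intro ε hε
      obtain ⟨T, hT0, hT⟩ := Att (ε / 2) (by linarith) (2 * s) (by linarith)
      refine ⟨T + 1, fun t ht => ?_⟩
      have hle : sig0 Ω φ h s t ≤ ε / 2 := by
        apply sig0_le Ω φ h (by linarith)
        intro x hx hxs τ hτ hτ2
        exact hT x hx hxs τ (by linarith)
      rw [Real.dist_eq, sub_zero, abs_of_nonneg (sig0_nonneg Ω φ h _ _)]
      linarith
  have h3 := h1.add h2
  rw [add_zero] at h3
  exact h3

end Main


/-- Lemma 5: a semiflow with output on `Ω ⊆ X` is uniformly asymptotically output stable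
(UAOS) on `Ω` if and only if there exists a `KL` function `σ` such that
`‖h(φ(t,x₀))‖_Y ≤ σ(‖x₀‖_X, t)` for all `x₀ ∈ Ω` and `t ≥ 0`. -/
theorem stmt12 {X Y : Type*} [NormedAddCommGroup X] [NormedAddCommGroup Y]
    (Ω : Set X) (φ : ℝ → X → X) (h : X → Y)
    (hΩ0 : (0:X) ∈ Ω)
    (hinv : ∀ t ≥ (0:ℝ), ∀ x ∈ Ω, φ t x ∈ Ω)
    (hid : ∀ x ∈ Ω, φ 0 x = x)
    (hsemi : ∀ s ≥ (0:ℝ), ∀ t ≥ (0:ℝ), ∀ x ∈ Ω, φ t (φ s x) = φ (t + s) x)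
    (hφ0 : ∀ t ≥ (0:ℝ), φ t 0 = 0) (hh0 : h 0 = 0) :
    -- UAOS: Lagrange ∧ Lyapunov output stability ∧ uniform output attractivity
    ((∀ R > (0:ℝ), ∃ C : ℝ, ∀ x₀ ∈ Ω, ‖x₀‖ < R → ∀ t ≥ (0:ℝ), ‖h (φ t x₀)‖ ≤ C) ∧
     (∀ ε > (0:ℝ), ∃ δ > (0:ℝ), ∀ x₀ ∈ Ω, ‖x₀‖ < δ → ∀ t ≥ (0:ℝ), ‖h (φ t x₀)‖ ≤ ε) ∧
     (∀ ε > (0:ℝ), ∀ R > (0:ℝ), ∃ T > (0:ℝ), ∀ x₀ ∈ Ω, ‖x₀‖ < R →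
        ∀ t ≥ T, ‖h (φ t x₀)‖ ≤ ε))
    ↔
    -- existence of a KL bound
    (∃ σ : ℝ → ℝ → ℝ,
      (ContinuousOn (fun q : ℝ × ℝ => σ q.1 q.2) (Ici 0 ×ˢ Ici 0) ∧
       (∀ t ≥ (0:ℝ), StrictMonoOn (fun s => σ s t) (Ici 0) ∧ σ 0 t = 0) ∧
       (∀ s ≥ (0:ℝ), AntitoneOn (σ s) (Ici 0) ∧ Tendsto (σ s) atTop (nhds 0)) ∧
       (∀ s ≥ (0:ℝ), ∀ t ≥ (0:ℝ), 0 ≤ σ s t)) ∧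
      ∀ x₀ ∈ Ω, ∀ t ≥ (0:ℝ), ‖h (φ t x₀)‖ ≤ σ ‖x₀‖ t) := by
  constructor
  · rintro ⟨Lag, Lya, Att⟩
    refine ⟨sig Ω φ h, ⟨sig_contOn Ω φ h Lag Lya, ?_, ?_, ?_⟩, ?_⟩
    · intro t ht
      constructor
      · intro s₁ hs₁ s₂ hs₂ h12
        have hm := sig0_mono Ω φ h Lag h12.le t
        have h1t : (0:ℝ) < 1 + t := by linarith
        have hlt : s₁ / (1 + t) < s₂ / (1 + t) := by gcongr
        show sig Ω φ h s₁ t < sig Ω φ h s₂ t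
        rw [sig, sig]; linarith
      · show sig Ω φ h 0 t = 0
        rw [sig, sig0, if_pos le_rfl, zero_div, add_zero]
    · intro s hs
      constructor
      · intro t₁ ht₁ t₂ ht₂ h12
        show sig Ω φ h s t₂ ≤ sig Ω φ h s t₁
        rw [sig, sig]
        have h1 := sig0_anti Ω φ h Lag h12 s
        have h2 : s / (1 + t₂) ≤ s / (1 + t₁) := by
          have ht₁' : (0:ℝ) ≤ t₁ := ht₁
          gcongr
        linarith
      · exact sig_tendsto Ω φ h Att hs
    · intro s hs t ht
      rw [sig]
      have h1 := sig0_nonneg Ω φ h s t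
      have h2 : (0:ℝ) ≤ s / (1 + t) := by positivity
      linarith
    · intro x₀ hx t ht
      rcases eq_or_lt_of_le (norm_nonneg x₀) with h0 | h0
      · have hx0 : x₀ = 0 := norm_eq_zero.1 h0.symm
        rw [hx0, hφ0 t ht, hh0, norm_zero]
        have := sig0_nonneg Ω φ h ‖(0:X)‖ t
        rw [sig]
        have h2 : (0:ℝ) ≤ ‖(0:X)‖ / (1 + t) := by positivity
        linarith
      · have h1 := le_sig0 Ω φ h Lag hx h0 ht
        rw [sig]
        have h2 : (0:ℝ) ≤ ‖x₀‖ / (1 + t) := by positivity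
        linarith
  · rintro ⟨σ, ⟨hcont, hmono, hdec, hnn⟩, hbound⟩
    refine ⟨?_, ?_, ?_⟩
    · -- Lagrange
      intro R hR
      refine ⟨σ R 0, fun x₀ hx hxR t ht => ?_⟩
      calc ‖h (φ t x₀)‖ ≤ σ ‖x₀‖ t := hbound x₀ hx t ht
        _ ≤ σ ‖x₀‖ 0 := (hdec ‖x₀‖ (norm_nonneg _)).1 self_mem_Ici (mem_Ici.2 ht) ht
        _ ≤ σ R 0 := ((hmono 0 le_rfl).1.monotoneOn) (mem_Ici.2 (norm_nonneg _))
            (mem_Ici.2 (by linarith : (0:ℝ) ≤ R)) hxR.le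
    · -- Lyapunov
      intro ε hε
      have hc : ContinuousWithinAt (fun q : ℝ × ℝ => σ q.1 q.2) (Ici 0 ×ˢ Ici 0) (0, 0) :=
        hcont (0, 0) ⟨self_mem_Ici, self_mem_Ici⟩
      have hcw : ContinuousWithinAt (fun s : ℝ => σ s 0) (Ici 0) 0 := by
        have hmap : MapsTo (fun s : ℝ => (s, (0:ℝ))) (Ici 0) (Ici (0:ℝ) ×ˢ Ici (0:ℝ)) :=
          fun s hs => ⟨hs, self_mem_Ici⟩
        have hf : ContinuousWithinAt (fun s : ℝ => (s, (0:ℝ))) (Ici 0) 0 :=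
          (continuous_id.prodMk continuous_const).continuousWithinAt
        exact ContinuousWithinAt.comp (f := fun s : ℝ => (s, (0:ℝ))) hc hf hmap
      rw [Metric.continuousWithinAt_iff] at hcw
      obtain ⟨δ, hδ, hδ'⟩ := hcw ε hε
      refine ⟨δ, hδ, fun x₀ hx hxδ t ht => ?_⟩
      have h1 : dist (σ ‖x₀‖ 0) (σ 0 0) < ε := by
        apply hδ' (mem_Ici.2 (norm_nonneg _))
        rw [Real.dist_eq, sub_zero, abs_of_nonneg (norm_nonneg _)]
        exact hxδ
      have h00 : σ 0 0 = 0 := (hmono 0 le_rfl).2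
      rw [Real.dist_eq, h00, sub_zero] at h1
      have h2 : σ ‖x₀‖ 0 < ε := lt_of_le_of_lt (le_abs_self _) h1
      calc ‖h (φ t x₀)‖ ≤ σ ‖x₀‖ t := hbound x₀ hx t ht
        _ ≤ σ ‖x₀‖ 0 := (hdec ‖x₀‖ (norm_nonneg _)).1 self_mem_Ici (mem_Ici.2 ht) ht
        _ ≤ ε := h2.le
    · -- attractivity
      intro ε hε R hR
      have htd : Tendsto (σ R) atTop (nhds 0) := (hdec R hR.le).2
      have hev : ∀ᶠ t in atTop, σ R t < ε := htd.eventually_lt_const hε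
      obtain ⟨T₀, hT₀⟩ := eventually_atTop.1 hev
      refine ⟨max T₀ 1, lt_of_lt_of_le zero_lt_one (le_max_right _ _), ?_⟩
      intro x₀ hx hxR t htT
      have ht0 : (0:ℝ) ≤ t := le_trans (le_trans zero_le_one (le_max_right T₀ 1)) htT
      calc ‖h (φ t x₀)‖ ≤ σ ‖x₀‖ t := hbound x₀ hx t ht0
        _ ≤ σ R t := ((hmono t ht0).1.monotoneOn) (mem_Ici.2 (norm_nonneg _))
            (mem_Ici.2 hR.le) hxR.le
        _ ≤ ε := (hT₀ t (le_trans (le_max_left _ _) htT)).le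
end

section
/- Suppose V, W : ℝ≥0 → ℝ≥0 are differentiable, ρ : ℝ≥0 → ℝ≥0 is continuous, non-decreasing and positive definite, γ : ℝ≥0 → ℝ≥0 is continuous, V'(t) ≤ -ρ(W(t)) for all t ≥ 0, and W'(t) ≤ γ(V(t)) for all t ≥ 0. Then W(t) → 0 as t → ∞. -/
open Filter Set

/-- Scalar core of Theorem 2 (case (2.9) with `ρ` non-decreasing): if
`V' ≤ -ρ(W)` and `W' ≤ γ(V)` with `ρ` continuous, non-decreasing, positive definite and
`γ` continuous (nonnegative), then `W(t) → 0` as `t → ∞`. -/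
theorem stmt14 (V W V' W' ρ γ : ℝ → ℝ)
    (hVnn : ∀ t ≥ (0:ℝ), 0 ≤ V t) (hWnn : ∀ t ≥ (0:ℝ), 0 ≤ W t)
    (hVd : ∀ t ≥ (0:ℝ), HasDerivAt V (V' t) t)
    (hWd : ∀ t ≥ (0:ℝ), HasDerivAt W (W' t) t)
    (hρc : ContinuousOn ρ (Ici 0)) (hρmono : MonotoneOn ρ (Ici 0))
    (hρ0 : ρ 0 = 0) (hρpos : ∀ s > (0:ℝ), 0 < ρ s)
    (hγc : ContinuousOn γ (Ici 0)) (hγnn : ∀ s ≥ (0:ℝ), 0 ≤ γ s)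
    (hV' : ∀ t ≥ (0:ℝ), V' t ≤ -ρ (W t))
    (hW' : ∀ t ≥ (0:ℝ), W' t ≤ γ (V t)) :
    Tendsto W atTop (nhds 0) := by
  -- ρ(W t) ≥ 0
  have hρW : ∀ t ≥ (0:ℝ), 0 ≤ ρ (W t) := fun t ht => by
    have := hρmono (self_mem_Ici) (hWnn t ht) (hWnn t ht)
    rwa [hρ0] at this
  -- V is continuous and antitone on [0,∞)
  have hVc : ContinuousOn V (Ici 0) := fun t ht =>
    ((hVd t ht).continuousAt).continuousWithinAt
  have hVanti : AntitoneOn V (Ici 0) := by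
    apply antitoneOn_of_deriv_nonpos (convex_Ici 0) hVc
    · intro x hx
      rw [interior_Ici] at hx
      exact ((hVd x hx.le).differentiableAt).differentiableWithinAt
    · intro x hx
      rw [interior_Ici] at hx
      rw [(hVd x hx.le).deriv]
      exact (hV' x hx.le).trans (neg_nonpos.mpr (hρW x hx.le))
  -- maximum M of γ on [0, V 0]
  obtain ⟨x₀, hx₀, hmax⟩ := (isCompact_Icc : IsCompact (Icc (0:ℝ) (V 0))).exists_isMaxOn
    ⟨0, le_refl 0, hVnn 0 le_rfl⟩ (hγc.mono Icc_subset_Ici_self)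
  set M := γ x₀ with hMdef
  have hM0 : 0 ≤ M := hγnn x₀ hx₀.1
  have hVmem : ∀ t ≥ (0:ℝ), V t ∈ Icc 0 (V 0) :=
    fun t ht => ⟨hVnn t ht, hVanti self_mem_Ici ht ht⟩
  have hW'M : ∀ t ≥ (0:ℝ), W' t ≤ M := fun t ht => (hW' t ht).trans (hmax (hVmem t ht))
  -- W grows at most linearly with slope M
  have hWgrow : ∀ s t : ℝ, 0 ≤ s → s ≤ t → W t - W s ≤ M * (t - s) := by
    intro s t hs hst
    have hmono : MonotoneOn (fun u => M * u - W u) (Ici 0) := by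
      apply monotoneOn_of_deriv_nonneg (convex_Ici 0)
      · exact ((continuous_const.mul continuous_id).continuousOn).sub
          (fun u hu => ((hWd u hu).continuousAt).continuousWithinAt)
      · intro x hx
        rw [interior_Ici] at hx
        exact (((hasDerivAt_id x).const_mul M).sub (hWd x hx.le)).differentiableAt.differentiableWithinAt
      · intro x hx
        rw [interior_Ici] at hx
        have hD : HasDerivAt (fun u => M * u - W u) (M * 1 - W' x) x :=
          ((hasDerivAt_id x).const_mul M).sub (hWd x hx.le)
        rw [hD.deriv]
        have := hW'M x hx.le
        linarith
    have := hmono hs (hs.trans hst) hst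
    simp only at this
    linarith
  -- prove the limit by contradiction
  by_contra hcon
  rw [Metric.tendsto_atTop] at hcon
  push_neg at hcon
  obtain ⟨ε, hε, hfreq⟩ := hcon
  -- extract: arbitrarily large t ≥ 0 with W t ≥ ε
  have hfreq' : ∀ N : ℝ, ∃ t, t ≥ N ∧ t ≥ 0 ∧ ε ≤ W t := by
    intro N
    obtain ⟨t, ht, hd⟩ := hfreq (max N 0)
    refine ⟨t, le_trans (le_max_left _ _) ht, le_trans (le_max_right _ _) ht, ?_⟩
    rw [Real.dist_eq, sub_zero, abs_of_nonneg (hWnn t (le_trans (le_max_right _ _) ht))] at hd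
    exact hd
  set δ : ℝ := ε / (2 * (M + 1)) with hδdef
  have hδpos : 0 < δ := div_pos hε (by linarith)
  have hMδ : M * δ ≤ ε / 2 := by
    have hδε : δ * (2 * (M + 1)) = ε := div_mul_cancel₀ _ (by linarith)
    nlinarith [hδpos, hM0]
  have hε2 : 0 < ε / 2 := by linarith
  set c : ℝ := ρ (ε / 2) * δ with hcdef
  have hcpos : 0 < c := mul_pos (hρpos _ hε2) hδpos
  -- drop lemma
  have hdrop : ∀ t₀ : ℝ, δ ≤ t₀ → ε ≤ W t₀ → V t₀ ≤ V (t₀ - δ) - c := by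
    intro t₀ hδt hWt
    have ht₀0 : (0:ℝ) ≤ t₀ := le_trans hδpos.le hδt
    have hsub : Icc (t₀ - δ) t₀ ⊆ Ici (0:ℝ) := by
      intro x hx
      have := hx.1
      simp only [mem_Ici]
      linarith [hδt]
    -- on this interval W ≥ ε/2
    have hWlb : ∀ x ∈ Icc (t₀ - δ) t₀, ε / 2 ≤ W x := by
      intro x hx
      have hx0 : (0:ℝ) ≤ x := hsub hx
      have := hWgrow x t₀ hx0 hx.2
      have h1 : t₀ - x ≤ δ := by linarith [hx.1]
      have h2 : M * (t₀ - x) ≤ M * δ := mul_le_mul_of_nonneg_left h1 hM0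
      linarith
    -- g = V + ρ(ε/2) * id is antitone on the interval
    have hanti : AntitoneOn (fun u => V u + ρ (ε/2) * u) (Icc (t₀ - δ) t₀) := by
      apply antitoneOn_of_deriv_nonpos (convex_Icc _ _)
      · exact ((hVc.mono hsub)).add ((continuous_const.mul continuous_id).continuousOn)
      · intro x hx
        rw [interior_Icc] at hx
        have hx0 : (0:ℝ) ≤ x := hsub (Ioo_subset_Icc_self hx)
        exact (((hVd x hx0).add (((hasDerivAt_id x).const_mul (ρ (ε/2)))))).differentiableAt.differentiableWithinAt
      · intro x hx
        rw [interior_Icc] at hx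
        have hx0 : (0:ℝ) ≤ x := hsub (Ioo_subset_Icc_self hx)
        have hD : HasDerivAt (fun u => V u + ρ (ε/2) * u) (V' x + ρ (ε/2) * 1) x :=
          (hVd x hx0).add ((hasDerivAt_id x).const_mul (ρ (ε/2)))
        rw [hD.deriv]
        have h1 : ρ (ε/2) ≤ ρ (W x) :=
          hρmono (mem_Ici.mpr hε2.le) (mem_Ici.mpr (hWnn x hx0)) (hWlb x (Ioo_subset_Icc_self hx))
        have h2 := hV' x hx0
        linarith
    have hmem1 : t₀ - δ ∈ Icc (t₀ - δ) t₀ := ⟨le_refl _, by linarith⟩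
    have hmem2 : t₀ ∈ Icc (t₀ - δ) t₀ := ⟨by linarith, le_refl _⟩
    have := hanti hmem1 hmem2 (by linarith)
    simp only at this
    rw [hcdef]
    nlinarith
  -- induction: V drops by c repeatedly
  have key : ∀ n : ℕ, ∃ t ≥ (0:ℝ), V t ≤ V 0 - n * c := by
    intro n
    induction n with
    | zero => exact ⟨0, le_refl 0, by simp⟩
    | succ n ih =>
      obtain ⟨t, ht0, hVt⟩ := ih
      obtain ⟨t', ht'N, ht'0, hWt'⟩ := hfreq' (t + δ)
      have hδt' : δ ≤ t' := by linarith
      have hstep := hdrop t' hδt' hWt'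
      have hVanti' : V (t' - δ) ≤ V t := by
        apply hVanti (mem_Ici.mpr ht0) (mem_Ici.mpr (by linarith)) (by linarith)
      refine ⟨t', ht'0, ?_⟩
      push_cast
      linarith
  -- contradiction: V t ≥ 0 but V 0 - n c < 0 for large n
  obtain ⟨n, hn⟩ := exists_nat_gt (V 0 / c)
  obtain ⟨t, ht0, hVt⟩ := key n
  have h1 : V 0 < n * c := by
    rwa [div_lt_iff₀ hcpos] at hn
  have := hVnn t ht0
  linarith
end

section
/- Suppose V, W : ℝ≥0 → ℝ≥0 are differentiable, ρ : ℝ≥0 → ℝ≥0 is continuous and positive definite, γ, ζ : ℝ≥0 → ℝ≥0 are continuous, V'(t) ≤ -ρ(W(t)), W'(t) ≥ -γ(V(t)), and W(t) ≤ ζ(V(t)) for all t ≥ 0. Then W(t) → 0 as t → ∞. -/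
open Filter Set

/-- If `f' ≤ -c` on `[a,b]`, then `f b + c*b ≤ f a + c*a`. -/
lemma decay_est (f f' : ℝ → ℝ) (c a b : ℝ) (hab : a ≤ b)
    (hd : ∀ t ∈ Icc a b, HasDerivAt f (f' t) t)
    (hb : ∀ t ∈ Icc a b, f' t ≤ -c) :
    f b + c * b ≤ f a + c * a := by
  set g : ℝ → ℝ := fun t => f t + c * t with hg
  have hgd : ∀ t ∈ Icc a b, HasDerivAt g (f' t + c) t := by
    intro t ht
    have hc : HasDerivAt (fun u : ℝ => c * u) c t := by
      simpa using (hasDerivAt_id t).const_mul c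
    exact (hd t ht).add hc
  have hanti : AntitoneOn g (Icc a b) := by
    apply antitoneOn_of_deriv_nonpos (convex_Icc a b)
    · exact fun t ht => (hgd t ht).continuousAt.continuousWithinAt
    · intro t ht
      rw [interior_Icc] at ht
      exact ((hgd t (Ioo_subset_Icc_self ht)).differentiableAt).differentiableWithinAt
    · intro t ht
      rw [interior_Icc] at ht
      rw [(hgd t (Ioo_subset_Icc_self ht)).deriv]
      linarith [hb t (Ioo_subset_Icc_self ht)]
  exact hanti ⟨le_refl a, hab⟩ ⟨hab, le_refl b⟩ hab

/-- Scalar core of Theorem 2 (case (2.10) with bound (2.11)): if `V' ≤ -ρ(W)`,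
`W' ≥ -γ(V)` and `W ≤ ζ(V)` with `ρ` continuous positive definite and `γ, ζ` continuous
(nonnegative), then `W(t) → 0` as `t → ∞`. -/
theorem stmt15 (V W V' W' ρ γ ζ : ℝ → ℝ)
    (hVnn : ∀ t ≥ (0:ℝ), 0 ≤ V t) (hWnn : ∀ t ≥ (0:ℝ), 0 ≤ W t)
    (hVd : ∀ t ≥ (0:ℝ), HasDerivAt V (V' t) t)
    (hWd : ∀ t ≥ (0:ℝ), HasDerivAt W (W' t) t)
    (hρc : ContinuousOn ρ (Ici 0))
    (hρ0 : ρ 0 = 0) (hρpos : ∀ s > (0:ℝ), 0 < ρ s)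
    (hγc : ContinuousOn γ (Ici 0)) (hγnn : ∀ s ≥ (0:ℝ), 0 ≤ γ s)
    (hζc : ContinuousOn ζ (Ici 0)) (hζnn : ∀ s ≥ (0:ℝ), 0 ≤ ζ s)
    (hV' : ∀ t ≥ (0:ℝ), V' t ≤ -ρ (W t))
    (hW' : ∀ t ≥ (0:ℝ), W' t ≥ -γ (V t))
    (hWζ : ∀ t ≥ (0:ℝ), W t ≤ ζ (V t)) :
    Tendsto W atTop (nhds 0) := by
  -- ρ is nonnegative on nonnegatives
  have hρnn : ∀ s ≥ (0:ℝ), 0 ≤ ρ s := by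
    intro s hs
    rcases eq_or_lt_of_le hs with h | h
    · rw [← h, hρ0]
    · exact (hρpos s h).le
  -- V' is nonpositive
  have hV'np : ∀ t ≥ (0:ℝ), V' t ≤ 0 := by
    intro t ht
    have := hV' t ht
    have := hρnn (W t) (hWnn t ht)
    linarith
  -- V is nonincreasing on [0,∞)
  have hVmono : ∀ a b : ℝ, 0 ≤ a → a ≤ b → V b ≤ V a := by
    intro a b ha hab
    have := decay_est V V' 0 a b hab
      (fun t ht => hVd t (le_trans ha ht.1))
      (fun t ht => by simpa using hV'np t (le_trans ha ht.1))
    linarith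
  have hV0 : ∀ t ≥ (0:ℝ), V t ≤ V 0 := fun t ht => hVmono 0 t le_rfl ht
  -- bound for γ on [0, V 0]
  have hV0nn : 0 ≤ V 0 := hVnn 0 le_rfl
  have hIccne : (Icc (0:ℝ) (V 0)).Nonempty := ⟨0, le_rfl, hV0nn⟩
  have hIccsub : Icc (0:ℝ) (V 0) ⊆ Ici 0 := fun s hs => hs.1
  obtain ⟨sγ, hsγ, hsγmax⟩ := isCompact_Icc.exists_isMaxOn hIccne (hγc.mono hIccsub)
  obtain ⟨sζ, hsζ, hsζmax⟩ := isCompact_Icc.exists_isMaxOn hIccne (hζc.mono hIccsub)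
  set M : ℝ := γ sγ + 1 with hM
  have hMpos : 0 < M := by
    have := hγnn sγ hsγ.1
    simp only [hM]; linarith
  have hW'lb : ∀ t ≥ (0:ℝ), -M ≤ W' t := by
    intro t ht
    have h1 := hW' t ht
    have h2 := hsγmax (⟨hVnn t ht, hV0 t ht⟩ : V t ∈ Icc 0 (V 0))
    simp only [mem_setOf_eq] at h2
    simp only [hM]; linarith
  set B : ℝ := ζ sζ with hB
  have hWub : ∀ t ≥ (0:ℝ), W t ≤ B := by
    intro t ht
    have h2 := hsζmax (⟨hVnn t ht, hV0 t ht⟩ : V t ∈ Icc 0 (V 0))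
    simp only [mem_setOf_eq] at h2
    exact le_trans (hWζ t ht) h2
  -- contradiction argument
  by_contra hnot
  rw [Metric.tendsto_atTop] at hnot
  push_neg at hnot
  obtain ⟨ε, hεpos, hε⟩ := hnot
  -- times with W t ≥ ε
  have hbig : ∀ T : ℝ, ∃ t, T ≤ t ∧ 0 ≤ t ∧ ε ≤ W t := by
    intro T
    obtain ⟨t, ht1, ht2⟩ := hε (max T 0)
    have ht0 : (0:ℝ) ≤ t := le_trans (le_max_right T 0) ht1
    refine ⟨t, le_trans (le_max_left T 0) ht1, ht0, ?_⟩
    rw [Real.dist_eq, sub_zero, abs_of_nonneg (hWnn t ht0)] at ht2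
    exact ht2
  -- ε ≤ B
  obtain ⟨t₀, -, ht₀0, ht₀ε⟩ := hbig 0
  have hεB : ε ≤ B := le_trans ht₀ε (hWub t₀ ht₀0)
  -- δ = min of ρ on [ε/2, B]
  have hne2 : (Icc (ε/2) B).Nonempty := ⟨ε, by constructor <;> linarith⟩
  have hsub2 : Icc (ε/2) B ⊆ Ici 0 := fun s hs => le_trans (by linarith) hs.1
  obtain ⟨s₀, hs₀, hs₀min⟩ := isCompact_Icc.exists_isMinOn hne2 (hρc.mono hsub2)
  set δ : ℝ := ρ s₀ with hδ
  have hδpos : 0 < δ := hρpos s₀ (lt_of_lt_of_le (by linarith) hs₀.1)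
  set L : ℝ := ε / (2 * M) with hL
  have hLpos : 0 < L := div_pos hεpos (by linarith)
  clear_value M B δ L
  -- key step: for t ≥ 0 with W t ≥ ε, V (t + L) ≤ V t - δ * L
  have hkey : ∀ t, 0 ≤ t → ε ≤ W t → V (t + L) ≤ V t - δ * L := by
    intro t ht0 htε
    -- on [t, t+L], W s ≥ ε/2
    have hWlb : ∀ s ∈ Icc t (t + L), ε/2 ≤ W s := by
      intro s hs
      have hs0 : (0:ℝ) ≤ s := le_trans ht0 hs.1
      -- apply decay_est to -W with c = -M on [t, s]
      have := decay_est (fun u => -W u) (fun u => -W' u) (-M) t s hs.1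
        (fun u hu => (hWd u (le_trans ht0 hu.1)).neg)
        (fun u hu => by
          have := hW'lb u (le_trans ht0 hu.1); simp; linarith)
      have this2 : -W s + -M * s ≤ -W t + -M * t := this
      -- W s ≥ W t - M (s - t)
      have hWs : W t - M * (s - t) ≤ W s := by nlinarith
      have hMts : M * (s - t) ≤ M * L := by
        apply mul_le_mul_of_nonneg_left _ hMpos.le
        linarith [hs.2]
      have hML : M * L = ε / 2 := by
        rw [hL]; field_simp
      linarith
    -- so ρ (W s) ≥ δ on [t, t+L], hence V' s ≤ -δ
    have := decay_est V V' δ t (t + L) (by linarith)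
      (fun s hs => hVd s (le_trans ht0 hs.1))
      (fun s hs => by
        have hs0 : (0:ℝ) ≤ s := le_trans ht0 hs.1
        have h1 := hV' s hs0
        have h2 := hs₀min (⟨hWlb s hs, hWub s hs0⟩ : W s ∈ Icc (ε/2) B)
        simp only [mem_setOf_eq] at h2
        simp only [hδ]; linarith)
    nlinarith
  -- inductive construction
  have hind : ∀ n : ℕ, ∃ t ≥ (0:ℝ), V t ≤ V 0 - n * (δ * L) := by
    intro n
    induction n with
    | zero => exact ⟨0, le_rfl, by simp⟩
    | succ n ih =>
      obtain ⟨tn, htn0, htnV⟩ := ih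
      obtain ⟨t, htge, ht0, htε⟩ := hbig tn
      have h1 := hkey t ht0 htε
      have h2 : V t ≤ V tn := hVmono tn t htn0 htge
      refine ⟨t + L, by linarith, ?_⟩
      push_cast
      nlinarith
  obtain ⟨n, hn⟩ := Archimedean.arch (V 0) (mul_pos hδpos hLpos)
  obtain ⟨t, ht0, htV⟩ := hind (n + 1)
  have hVt := hVnn t ht0
  have : ((n:ℝ) + 1) * (δ * L) > V 0 := by
    have : (n : ℝ) * (δ * L) ≥ V 0 := by
      simpa [nsmul_eq_mul] using hn
    nlinarith
  push_cast at htV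
  linarith
end

section
/- Suppose V, W : ℝ≥0 → ℝ≥0 are differentiable with V'(t) ≤ -ρ(W(t)) and W'(t) ≤ 0 for all t ≥ 0, where ρ : ℝ≥0 → ℝ≥0 is continuous and positive definite. Then for every ε > 0, if t ≥ (1 + V(0)) / min{ρ(s) : ε ≤ s ≤ ε + W(0)}, then W(t) < ε. In particular W(t) → 0, with a rate depending only on V(0), W(0), ε and ρ. -/
open Filter Set

/-- Scalar trajectory-wise version of Theorem 1 with the explicit uniform time bound:
if `V' ≤ -ρ(W)` and `W' ≤ 0` with `ρ` continuous positive definite, then for every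
`ε > 0` and every `t ≥ (1 + V 0) / min{ρ s : ε ≤ s ≤ ε + W 0}` we have `W t < ε`;
in particular `W(t) → 0`. -/
theorem stmt16 (V W V' W' ρ : ℝ → ℝ)
    (hVnn : ∀ t ≥ (0:ℝ), 0 ≤ V t) (hWnn : ∀ t ≥ (0:ℝ), 0 ≤ W t)
    (hVd : ∀ t ≥ (0:ℝ), HasDerivAt V (V' t) t)
    (hWd : ∀ t ≥ (0:ℝ), HasDerivAt W (W' t) t)
    (hρc : ContinuousOn ρ (Ici 0))
    (hρ0 : ρ 0 = 0) (hρpos : ∀ s > (0:ℝ), 0 < ρ s)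
    (hV' : ∀ t ≥ (0:ℝ), V' t ≤ -ρ (W t))
    (hW' : ∀ t ≥ (0:ℝ), W' t ≤ 0) :
    (∀ ε > (0:ℝ), ∀ t : ℝ,
      t ≥ (1 + V 0) / sInf (ρ '' Icc ε (ε + W 0)) → W t < ε) ∧
    Tendsto W atTop (nhds 0) := by
  have hV0 : 0 ≤ V 0 := hVnn 0 le_rfl
  have hW0 : 0 ≤ W 0 := hWnn 0 le_rfl
  have hanti : AntitoneOn W (Ici 0) := by
    apply antitoneOn_of_deriv_nonpos (convex_Ici 0)
    · intro s hs; exact (hWd s hs).continuousAt.continuousWithinAt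
    · intro s hs
      rw [interior_Ici] at hs
      exact ((hWd s hs.le).differentiableAt).differentiableWithinAt
    · intro s hs
      rw [interior_Ici] at hs
      rw [(hWd s hs.le).deriv]
      exact hW' s hs.le
  have key : ∀ ε > (0:ℝ), 0 < sInf (ρ '' Icc ε (ε + W 0)) ∧
      ∀ t : ℝ, t ≥ (1 + V 0) / sInf (ρ '' Icc ε (ε + W 0)) → W t < ε := by
    intro ε hε
    have hKne : (Icc ε (ε + W 0)).Nonempty := ⟨ε, le_refl ε, by linarith⟩
    have hKsub : Icc ε (ε + W 0) ⊆ Ici 0 := fun x hx => le_trans hε.le hx.1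
    obtain ⟨x, hxK, hxmin⟩ := (isCompact_Icc).exists_isMinOn hKne (hρc.mono hKsub)
    have hxmin' : ∀ y ∈ Icc ε (ε + W 0), ρ x ≤ ρ y := isMinOn_iff.mp hxmin
    set m := sInf (ρ '' Icc ε (ε + W 0)) with hm
    have hbdd : BddBelow (ρ '' Icc ε (ε + W 0)) :=
      ⟨ρ x, fun y ⟨s, hs, hsy⟩ => hsy ▸ hxmin' s hs⟩
    have hmx : m = ρ x := by
      apply le_antisymm
      · exact csInf_le hbdd ⟨x, hxK, rfl⟩
      · exact le_csInf (hKne.image ρ) (fun y ⟨s, hs, hsy⟩ => hsy ▸ hxmin' s hs)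
    have hmpos : 0 < m := hmx ▸ hρpos x (lt_of_lt_of_le hε hxK.1)
    have hmle : ∀ s ∈ Icc ε (ε + W 0), m ≤ ρ s := fun s hs =>
      csInf_le hbdd ⟨s, hs, rfl⟩
    refine ⟨hmpos, fun t ht => ?_⟩
    have htpos : 0 < t := lt_of_lt_of_le (div_pos (by linarith) hmpos) ht
    by_contra h
    push_neg at h
    -- h : ε ≤ W t
    have hWs : ∀ s ∈ Icc (0:ℝ) t, W s ∈ Icc ε (ε + W 0) := by
      intro s hs
      constructor
      · exact le_trans h (hanti (mem_Ici.mpr hs.1) (mem_Ici.mpr htpos.le) hs.2)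
      · have := hanti (mem_Ici.mpr le_rfl) (mem_Ici.mpr hs.1) hs.1
        linarith
    have hganti : AntitoneOn (fun s => V s + m * s) (Icc 0 t) := by
      apply antitoneOn_of_deriv_nonpos (convex_Icc 0 t)
      · intro s hs
        exact ((hVd s hs.1).continuousAt.add
          ((continuous_const.mul continuous_id).continuousAt)).continuousWithinAt
      · intro s hs
        rw [interior_Icc] at hs
        exact (((hVd s hs.1.le).add
          ((hasDerivAt_id s).const_mul m)).differentiableAt).differentiableWithinAt
      · intro s hs
        rw [interior_Icc] at hs
        have hg : HasDerivAt (fun u => V u + m * u) (V' s + m * 1) s :=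
          (hVd s hs.1.le).add ((hasDerivAt_id s).const_mul m)
        rw [hg.deriv]
        have h1 := hV' s hs.1.le
        have h2 := hmle (W s) (hWs s ⟨hs.1.le, hs.2.le⟩)
        linarith
    have hgt : V t + m * t ≤ V 0 + m * 0 :=
      hganti ⟨le_rfl, htpos.le⟩ ⟨htpos.le, le_rfl⟩ htpos.le
    have hVt : 0 ≤ V t := hVnn t htpos.le
    have : (1 + V 0) ≤ m * t := by
      rw [ge_iff_le, div_le_iff₀ hmpos] at ht
      linarith [ht]
    linarith
  refine ⟨fun ε hε t ht => (key ε hε).2 t ht, ?_⟩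
  rw [Metric.tendsto_atTop]
  intro ε hε
  obtain ⟨hm, h2⟩ := key ε hε
  refine ⟨(1 + V 0) / sInf (ρ '' Icc ε (ε + W 0)), fun n hn => ?_⟩
  have hn0 : 0 ≤ n := le_trans (div_pos (by linarith) hm).le hn
  rw [Real.dist_eq, sub_zero, abs_of_nonneg (hWnn n hn0)]
  exact h2 n hn
end

section
/- Let f, g, φ : ℝⁿ → ℝⁿ/ℝᵖ define the adaptive closed loop ẏ = f(y) + g(y)(k(y) - Lμ(y)(∇P(y)g(y)) - φ(y)ᵀz), ż = γ⁻¹(∇P(y)g(y))φ(y), under assumptions (H) and (A) below. Then along any solution, the function t ↦ P(y(t) ) satisfies d/dt P(y(t)) ≤ -½ Q(y(t)) whenever (y(t), z(t)) lies in Ω := {(y,z) : P(y) + (γ/2)|z|² ≤ γL}. -/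
open Filter Set
open scoped RealInnerProductSpace

lemma key_arith (L μv Qv a c zn φn F K : ℝ) (hL : 0 < L) (hμ : 0 < μv) (hQ : 0 ≤ Qv)
    (hH : F + a * K ≤ -Qv) (hz2 : zn ^ 2 ≤ 2 * L) (hcs : |c| ≤ φn * zn)
    (hA : φn ^ 2 ≤ μv * Qv) (hφn : 0 ≤ φn) (hzn : 0 ≤ zn) :
    F + (K - L * μv * a - c) * a ≤ -(1 / 2) * Qv := by
  have h1 : (|c| * |a|) ^ 2 ≤ (2 * L) * (μv * Qv) * a ^ 2 := by
    have hsq : (|c| * |a|) ^ 2 = |c| ^ 2 * a ^ 2 := by rw [mul_pow, sq_abs, sq_abs]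
    have hc2 : |c| ^ 2 ≤ φn ^ 2 * zn ^ 2 := by
      rw [← mul_pow]; exact pow_le_pow_left₀ (abs_nonneg c) hcs 2
    have h2 : φn ^ 2 * zn ^ 2 ≤ (μv * Qv) * (2 * L) :=
      mul_le_mul hA hz2 (sq_nonneg zn) (mul_nonneg hμ.le hQ)
    rw [hsq]
    nlinarith [sq_nonneg a, hc2, h2]
  have hkey : |c| * |a| ≤ 1 / 2 * Qv + L * μv * a ^ 2 := by
    have hx : 0 ≤ |c| * |a| := mul_nonneg (abs_nonneg c) (abs_nonneg a)
    have hr : 0 ≤ 1 / 2 * Qv + L * μv * a ^ 2 := by positivity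
    have h2 : (|c| * |a|) ^ 2 ≤ (1 / 2 * Qv + L * μv * a ^ 2) ^ 2 := by
      nlinarith [sq_nonneg (1 / 2 * Qv - L * μv * a ^ 2), h1]
    exact (pow_le_pow_iff_left₀ hx hr (by norm_num)).mp h2
  have hbound : -(c * a) ≤ |c| * |a| := by rw [← abs_mul]; exact neg_le_abs _
  nlinarith [hkey, hbound, hH]

/-- Key estimate (5.32) in the proof of Theorem 3 (semiglobal UAOS through adaptive
control): under Assumptions (H) and (A), along any solution of the modified adaptive
closed loop, `d/dt P(y(t)) ≤ -½ Q(y(t))` whenever `(y(t), z(t)) ∈ Ω`, where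
`Ω = {(y,z) : P(y) + (γ/2)|z|² ≤ γL}`. -/
theorem stmt17 {n p : ℕ}
    (f g : EuclideanSpace ℝ (Fin n) → EuclideanSpace ℝ (Fin n))
    (φv : EuclideanSpace ℝ (Fin n) → EuclideanSpace ℝ (Fin p))
    (k : EuclideanSpace ℝ (Fin n) → ℝ)
    (P Q μ : EuclideanSpace ℝ (Fin n) → ℝ)
    (gradP : EuclideanSpace ℝ (Fin n) → EuclideanSpace ℝ (Fin n))
    (γ L : ℝ) (hγ : 0 < γ) (hL : 0 < L)
    -- regularity of the data
    (hfL : LocallyLipschitz f) (hgL : LocallyLipschitz g) (hφL : LocallyLipschitz φv)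
    (hf0 : f 0 = 0) (hφ0 : φv 0 = 0)
    -- Assumption (H)
    (hP2 : ContDiff ℝ 2 P) (hgrad : ∀ y, HasGradientAt P (gradP y) y)
    (hPnn : ∀ y, 0 ≤ P y) (hP0 : P 0 = 0)
    (hPpos : ∀ y, y ≠ 0 → 0 < P y)
    (hPrad : ∀ M : ℝ, ∃ r : ℝ, ∀ y, r < ‖y‖ → M < P y)
    (hQ1 : ContDiff ℝ 1 Q) (hQnn : ∀ y, 0 ≤ Q y) (hQ0 : Q 0 = 0)
    (hQpos : ∀ y, y ≠ 0 → 0 < Q y)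
    (hkL : LocallyLipschitz k) (hk0 : k 0 = 0)
    (hH : ∀ y, ⟪gradP y, f y⟫ + ⟪gradP y, g y⟫ * k y ≤ -Q y)
    -- Assumption (A)
    (hμL : LocallyLipschitz μ) (hμpos : ∀ y, 0 < μ y)
    (hA : ∀ y, ‖φv y‖ ^ 2 ≤ μ y * Q y)
    -- a solution of the closed-loop system (3.9)
    (y : ℝ → EuclideanSpace ℝ (Fin n)) (z : ℝ → EuclideanSpace ℝ (Fin p))
    (hy : ∀ t : ℝ, HasDerivAt y
      (f (y t) + (k (y t) - L * μ (y t) * ⟪gradP (y t), g (y t)⟫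
        - ⟪φv (y t), z t⟫) • g (y t)) t)
    (hz : ∀ t : ℝ, HasDerivAt z
      ((γ⁻¹ * ⟪gradP (y t), g (y t)⟫) • φv (y t)) t) :
    ∀ t : ℝ, P (y t) + (γ / 2) * ‖z t‖ ^ 2 ≤ γ * L →
      ∃ d : ℝ, HasDerivAt (fun s => P (y s)) d t ∧ d ≤ -(1 / 2) * Q (y t) := by
  intro t hΩ
  have hchain : HasDerivAt (fun s => P (y s))
      (⟪gradP (y t), f (y t) + (k (y t) - L * μ (y t) * ⟪gradP (y t), g (y t)⟫
        - ⟪φv (y t), z t⟫) • g (y t)⟫) t := by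
    have hF := (hgrad (y t)).hasFDerivAt
    have := hF.comp_hasDerivAt t (hy t)
    simp at this
    exact this
  refine ⟨_, hchain, ?_⟩
  rw [inner_add_right, real_inner_smul_right]
  have hz2 : ‖z t‖ ^ 2 ≤ 2 * L := by nlinarith [hPnn (y t), hΩ]
  have hcs : |⟪φv (y t), z t⟫| ≤ ‖φv (y t)‖ * ‖z t‖ := abs_real_inner_le_norm _ _
  have hHt : ⟪gradP (y t), f (y t)⟫ + ⟪gradP (y t), g (y t)⟫ * k (y t) ≤ -Q (y t) := hH (y t)
  have := key_arith L (μ (y t)) (Q (y t)) ⟪gradP (y t), g (y t)⟫ ⟪φv (y t), z t⟫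
    (‖z t‖) (‖φv (y t)‖) ⟪gradP (y t), f (y t)⟫ (k (y t)) hL (hμpos (y t)) (hQnn (y t))
    (by linarith [hHt, mul_comm ⟪gradP (y t), g (y t)⟫ (k (y t))]) hz2 hcs (hA (y t))
    (norm_nonneg _) (norm_nonneg _)
  linarith [this, mul_comm (k (y t) - L * μ (y t) * ⟪gradP (y t), g (y t)⟫
    - ⟪φv (y t), z t⟫) ⟪gradP (y t), g (y t)⟫]
end
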